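/- arXiv:2403.04295 — 7 statements merged into one kernel-verified Lean document; each statement's English description precedes it below -/
import Mathlib

section
/- Let ρ ≥ γ ≥ 0 with ρ + γ > 1 and ρ < 1. Then there is a constant C (depending only on ρ, γ) such that for all real c₁, c₂, ∫_ℝ ⟨x - c₁⟩^{-ρ} ⟨x - c₂⟩^{-γ} dx ≤ C ⟨c₁ - c₂⟩^{-γ} ⟨c₁ - c₂⟩^{1-ρ}. -/
open MeasureTheory Real Set ENNReal

lemma aux_lintegral {a b K S : ℝ} (ha0 : 0 ≤ a) (ha : a < 1) (hb : 1 < b)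
    (hS : 0 < S) (hK : 0 ≤ K) :
    ∫⁻ y : ℝ, ENNReal.ofReal (if |y| ≤ S then K * |y| ^ (-a) else |y| ^ (-b)) ≤
      ENNReal.ofReal (2 * (K * S ^ (1 - a) / (1 - a) + S ^ (1 - b) / (b - 1))) := by
  have hV1 : 0 ≤ K * S ^ (1 - a) / (1 - a) := div_nonneg (by positivity) (by linarith)
  have hV2 : 0 ≤ S ^ (1 - b) / (b - 1) := div_nonneg (by positivity) (by linarith)
  apply le_of_eq
  set G : ℝ → ℝ≥0∞ := fun y => ENNReal.ofReal (if |y| ≤ S then K * |y| ^ (-a) else |y| ^ (-b))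
    with hG
  have hGeven : ∀ y, G (-y) = G y := by intro y; simp [hG, abs_neg]
  -- value on the positive half line
  have hpos : ∫⁻ y in Ioi (0:ℝ), G y
      = ENNReal.ofReal (K * S ^ (1 - a) / (1 - a) + S ^ (1 - b) / (b - 1)) := by
    have hsplit : Ioc (0:ℝ) S ∪ Ioi S = Ioi 0 := Ioc_union_Ioi_eq_Ioi hS.le
    rw [← hsplit, lintegral_union measurableSet_Ioi (Ioc_disjoint_Ioi le_rfl)]
    have h1 : ∫⁻ y in Ioc (0:ℝ) S, G y = ENNReal.ofReal (K * S ^ (1 - a) / (1 - a)) := by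
      have e1 : ∫⁻ y in Ioc (0:ℝ) S, G y
          = ∫⁻ y in Ioc (0:ℝ) S, ENNReal.ofReal (K * y ^ (-a)) := by
        apply setLIntegral_congr_fun measurableSet_Ioc
        intro y hy
        have h1 : |y| = y := abs_of_pos hy.1
        simp [hG, h1, hy.2]
      rw [e1, ← ofReal_integral_eq_lintegral_ofReal]
      · congr 1
        rw [MeasureTheory.integral_const_mul]
        have : ∫ y in Ioc (0:ℝ) S, y ^ (-a) = S ^ (1 - a) / (1 - a) := by
          rw [← intervalIntegral.integral_of_le hS.le,
            integral_rpow (Or.inl (by linarith))]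
          rw [Real.zero_rpow (by linarith : -a + 1 ≠ 0)]
          rw [show -a + 1 = 1 - a by ring, sub_zero]
        rw [this, mul_div_assoc]
      · have h : IntervalIntegrable (fun y : ℝ => y ^ (-a)) volume 0 S :=
          intervalIntegral.intervalIntegrable_rpow' (by linarith)
        exact h.1.const_mul K
      · filter_upwards [ae_restrict_mem measurableSet_Ioc] with y hy
        exact mul_nonneg hK (Real.rpow_nonneg hy.1.le _)
    have h2 : ∫⁻ y in Ioi S, G y = ENNReal.ofReal (S ^ (1 - b) / (b - 1)) := by
      have e1 : ∫⁻ y in Ioi S, G y = ∫⁻ y in Ioi S, ENNReal.ofReal (y ^ (-b)) := by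
        apply setLIntegral_congr_fun measurableSet_Ioi
        intro y hy
        have h1 : |y| = y := abs_of_pos (hS.trans hy)
        simp [hG, h1, not_le.2 (show S < y from hy)]
      rw [e1, ← ofReal_integral_eq_lintegral_ofReal]
      · congr 1
        rw [integral_Ioi_rpow_of_lt (by linarith) hS]
        rw [show -b + 1 = 1 - b by ring, show b - 1 = -(1 - b) by ring, div_neg, neg_div]
      · exact integrableOn_Ioi_rpow_of_lt (by linarith) hS
      · filter_upwards [ae_restrict_mem measurableSet_Ioi] with y hy
        exact Real.rpow_nonneg (hS.trans hy).le _
    rw [h1, h2, ← ENNReal.ofReal_add hV1 hV2]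
  -- negative half line equals positive half line
  have hneg : ∫⁻ y in Iic (0:ℝ), G y = ∫⁻ y in Ioi (0:ℝ), G y := by
    have hmp : MeasurePreserving (fun x : ℝ => -x) volume volume :=
      Measure.measurePreserving_neg _
    have := hmp.setLIntegral_comp_preimage_emb measurableEmbedding_neg G (Iic (0:ℝ))
    have hpre : (fun x : ℝ => -x) ⁻¹' (Iic (0:ℝ)) = Ici (0:ℝ) := by
      ext x; simp
    rw [hpre] at this
    have heq : ∫⁻ y in Ici (0:ℝ), G (-y) = ∫⁻ y in Ici (0:ℝ), G y := by
      simp_rw [hGeven]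
    rw [← this, heq, ← setLIntegral_congr (Ioi_ae_eq_Ici (a := (0:ℝ)))]
  rw [← lintegral_add_compl G (measurableSet_Iic (a := (0:ℝ))), compl_Iic, hneg, hpos,
    ← ENNReal.ofReal_add (by linarith) (by linarith)]
  congr 1; ring

lemma measG (K S e₁ e₂ c : ℝ) :
    Measurable (fun x : ℝ =>
      ENNReal.ofReal (if |x - c| ≤ S then K * |x - c| ^ e₁ else |x - c| ^ e₂)) := by
  apply ENNReal.measurable_ofReal.comp
  apply Measurable.ite (measurableSet_le (by fun_prop) measurable_const) <;> fun_prop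

set_option maxHeartbeats 1000000 in
theorem stmt_1 (ρ γ : ℝ) (hργ : γ ≤ ρ) (hγ : 0 ≤ γ) (hsum : 1 < ρ + γ) (hρ : ρ < 1) :
    ∃ C : ℝ, 0 < C ∧ ∀ c₁ c₂ : ℝ,
      (∫ x : ℝ, (Real.sqrt (1 + (x - c₁) ^ 2)) ^ (-ρ) * (Real.sqrt (1 + (x - c₂) ^ 2)) ^ (-γ))
        ≤ C * (Real.sqrt (1 + (c₁ - c₂) ^ 2)) ^ (-γ)
            * (Real.sqrt (1 + (c₁ - c₂) ^ 2)) ^ (1 - ρ) := by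
  have hρ0 : 0 ≤ ρ := le_trans hγ hργ
  have hγ1 : γ < 1 := lt_of_le_of_lt hργ hρ
  have h1ρ : (0:ℝ) < 1 - ρ := by linarith
  have h1γ : (0:ℝ) < 1 - γ := by linarith
  have hs1 : (0:ℝ) < ρ + γ - 1 := by linarith
  refine ⟨4 / (1 - ρ) + 4 / (1 - γ) + 4 / (ρ + γ - 1), by positivity, fun c₁ c₂ => ?_⟩
  set C : ℝ := 4 / (1 - ρ) + 4 / (1 - γ) + 4 / (ρ + γ - 1) with hC
  have hCpos : 0 < C := by positivity
  set S : ℝ := Real.sqrt (1 + (c₁ - c₂) ^ 2) with hSdef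
  have hS1 : 1 ≤ S := by
    rw [hSdef]
    exact (Real.le_sqrt zero_le_one (by positivity)).2 (by nlinarith [sq_nonneg (c₁ - c₂)])
  have hS0 : 0 < S := lt_of_lt_of_le one_pos hS1
  have hSsq : S ^ 2 = 1 + (c₁ - c₂) ^ 2 := Real.sq_sqrt (by positivity)
  have hF0 : ∀ x : ℝ, 0 ≤ (Real.sqrt (1 + (x - c₁) ^ 2)) ^ (-ρ)
      * (Real.sqrt (1 + (x - c₂) ^ 2)) ^ (-γ) := fun x =>
    mul_nonneg (Real.rpow_nonneg (Real.sqrt_nonneg _) _)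
      (Real.rpow_nonneg (Real.sqrt_nonneg _) _)
  have hFm : AEStronglyMeasurable (fun x : ℝ => (Real.sqrt (1 + (x - c₁) ^ 2)) ^ (-ρ)
      * (Real.sqrt (1 + (x - c₂) ^ 2)) ^ (-γ)) volume := by
    apply Measurable.aestronglyMeasurable; fun_prop
  rw [integral_eq_lintegral_of_nonneg_ae (Filter.Eventually.of_forall hF0) hFm]
  apply ENNReal.toReal_le_of_le_ofReal
  · exact mul_nonneg (mul_nonneg hCpos.le (Real.rpow_nonneg hS0.le _))
      (Real.rpow_nonneg hS0.le _)
  -- the two majorants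
  set G₁ : ℝ → ℝ≥0∞ := fun y =>
    ENNReal.ofReal (if |y| ≤ S then (S/2) ^ (-γ) * |y| ^ (-ρ) else |y| ^ (-(ρ + γ))) with hG₁
  set G₂ : ℝ → ℝ≥0∞ := fun y =>
    ENNReal.ofReal (if |y| ≤ S then (S/2) ^ (-ρ) * |y| ^ (-γ) else |y| ^ (-(ρ + γ))) with hG₂
  have hmeas₁ : Measurable fun x : ℝ => G₁ (x - c₁) := by
    simp only [hG₁]
    exact measG _ _ _ _ _
  -- a.e. pointwise bound
  have habs_sqrt : ∀ u : ℝ, |u| ≤ Real.sqrt (1 + u ^ 2) := fun u =>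
    (Real.le_sqrt (abs_nonneg _) (by positivity)).2 (by rw [sq_abs]; nlinarith)
  have hptwise : ∀ᵐ x : ℝ, ENNReal.ofReal ((Real.sqrt (1 + (x - c₁) ^ 2)) ^ (-ρ)
      * (Real.sqrt (1 + (x - c₂) ^ 2)) ^ (-γ)) ≤ G₁ (x - c₁) + G₂ (x - c₂) := by
    have h1 : ∀ᵐ x : ℝ, x ≠ c₁ := by
      rw [ae_iff]
      simpa using measure_singleton (α := ℝ) c₁
    have h2 : ∀ᵐ x : ℝ, x ≠ c₂ := by
      rw [ae_iff]
      simpa using measure_singleton (α := ℝ) c₂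
    filter_upwards [h1, h2] with x hx1 hx2
    have key : ∀ u e : ℝ, 0 ≤ e → x ≠ u →
        Real.sqrt (1 + (x - u) ^ 2) ^ (-e) ≤ |x - u| ^ (-e) := by
      intro u e he hu
      exact Real.rpow_le_rpow_of_nonpos (abs_pos.2 (sub_ne_zero.2 hu)) (habs_sqrt _)
        (neg_nonpos.2 he)
    rcases le_total |x - c₁| |x - c₂| with hAB | hAB
    · refine le_trans ?_ (self_le_add_right _ _)
      simp only [hG₁]
      apply ENNReal.ofReal_le_ofReal
      by_cases hcase : |x - c₁| ≤ S
      · rw [if_pos hcase]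
        have hb1 : Real.sqrt (1 + (x - c₁) ^ 2) ^ (-ρ) ≤ |x - c₁| ^ (-ρ) := key c₁ ρ hρ0 hx1
        have hb2 : Real.sqrt (1 + (x - c₂) ^ 2) ^ (-γ) ≤ (S/2) ^ (-γ) := by
          apply Real.rpow_le_rpow_of_nonpos (by positivity) ?_ (neg_nonpos.2 hγ)
          apply (Real.le_sqrt (by positivity) (by positivity)).2
          have habs : |c₁ - c₂| ≤ 2 * |x - c₂| := by
            calc |c₁ - c₂| = |(c₁ - x) + (x - c₂)| := by ring_nf
              _ ≤ |c₁ - x| + |x - c₂| := abs_add_le _ _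
              _ = |x - c₁| + |x - c₂| := by rw [abs_sub_comm]
              _ ≤ 2 * |x - c₂| := by linarith
          have hsq : (c₁ - c₂) ^ 2 ≤ 4 * (x - c₂) ^ 2 := by
            have h := mul_self_le_mul_self (abs_nonneg (c₁ - c₂)) habs
            nlinarith [abs_mul_abs_self (c₁ - c₂), abs_mul_abs_self (x - c₂)]
          rw [div_pow, hSsq]
          nlinarith
        calc (Real.sqrt (1 + (x - c₁) ^ 2)) ^ (-ρ) * (Real.sqrt (1 + (x - c₂) ^ 2)) ^ (-γ)
            ≤ |x - c₁| ^ (-ρ) * ((S/2) ^ (-γ)) :=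
              mul_le_mul hb1 hb2 (Real.rpow_nonneg (Real.sqrt_nonneg _) _)
                (Real.rpow_nonneg (abs_nonneg _) _)
          _ = (S/2) ^ (-γ) * |x - c₁| ^ (-ρ) := mul_comm _ _
      · rw [if_neg hcase]
        have hb1 : Real.sqrt (1 + (x - c₁) ^ 2) ^ (-ρ) ≤ |x - c₁| ^ (-ρ) := key c₁ ρ hρ0 hx1
        have hb2 : Real.sqrt (1 + (x - c₂) ^ 2) ^ (-γ) ≤ |x - c₁| ^ (-γ) := by
          apply Real.rpow_le_rpow_of_nonpos (abs_pos.2 (sub_ne_zero.2 hx1)) ?_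
            (neg_nonpos.2 hγ)
          exact le_trans hAB (habs_sqrt _)
        have hsplit : |x - c₁| ^ (-(ρ + γ)) = |x - c₁| ^ (-ρ) * |x - c₁| ^ (-γ) := by
          rw [← Real.rpow_add (abs_pos.2 (sub_ne_zero.2 hx1))]
          congr 1; ring
        rw [hsplit]
        exact mul_le_mul hb1 hb2 (Real.rpow_nonneg (Real.sqrt_nonneg _) _)
          (Real.rpow_nonneg (abs_nonneg _) _)
    · refine le_trans ?_ (self_le_add_left _ _)
      simp only [hG₂]
      apply ENNReal.ofReal_le_ofReal
      by_cases hcase : |x - c₂| ≤ S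
      · rw [if_pos hcase]
        have hb2 : Real.sqrt (1 + (x - c₂) ^ 2) ^ (-γ) ≤ |x - c₂| ^ (-γ) := key c₂ γ hγ hx2
        have hb1 : Real.sqrt (1 + (x - c₁) ^ 2) ^ (-ρ) ≤ (S/2) ^ (-ρ) := by
          apply Real.rpow_le_rpow_of_nonpos (by positivity) ?_ (neg_nonpos.2 hρ0)
          apply (Real.le_sqrt (by positivity) (by positivity)).2
          have habs : |c₁ - c₂| ≤ 2 * |x - c₁| := by
            calc |c₁ - c₂| = |(c₁ - x) + (x - c₂)| := by ring_nf
              _ ≤ |c₁ - x| + |x - c₂| := abs_add_le _ _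
              _ = |x - c₁| + |x - c₂| := by rw [abs_sub_comm]
              _ ≤ 2 * |x - c₁| := by linarith
          have hsq : (c₁ - c₂) ^ 2 ≤ 4 * (x - c₁) ^ 2 := by
            have h := mul_self_le_mul_self (abs_nonneg (c₁ - c₂)) habs
            nlinarith [abs_mul_abs_self (c₁ - c₂), abs_mul_abs_self (x - c₁)]
          rw [div_pow, hSsq]
          nlinarith
        exact mul_le_mul hb1 hb2 (Real.rpow_nonneg (Real.sqrt_nonneg _) _)
          (Real.rpow_nonneg (div_nonneg hS0.le (by norm_num)) _)
      · rw [if_neg hcase]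
        have hb2 : Real.sqrt (1 + (x - c₂) ^ 2) ^ (-γ) ≤ |x - c₂| ^ (-γ) := key c₂ γ hγ hx2
        have hb1 : Real.sqrt (1 + (x - c₁) ^ 2) ^ (-ρ) ≤ |x - c₂| ^ (-ρ) := by
          apply Real.rpow_le_rpow_of_nonpos (abs_pos.2 (sub_ne_zero.2 hx2)) ?_
            (neg_nonpos.2 hρ0)
          exact le_trans hAB (habs_sqrt _)
        have hsplit : |x - c₂| ^ (-(ρ + γ)) = |x - c₂| ^ (-ρ) * |x - c₂| ^ (-γ) := by
          rw [← Real.rpow_add (abs_pos.2 (sub_ne_zero.2 hx2))]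
          congr 1; ring
        rw [hsplit]
        exact mul_le_mul hb1 hb2 (Real.rpow_nonneg (Real.sqrt_nonneg _) _)
          (Real.rpow_nonneg (abs_nonneg _) _)
  -- bounds for the two translated majorant integrals
  have hO1 : ∫⁻ x : ℝ, G₁ (x - c₁) ≤
      ENNReal.ofReal (2 * ((S/2) ^ (-γ) * S ^ (1 - ρ) / (1 - ρ)
        + S ^ (1 - (ρ + γ)) / ((ρ + γ) - 1))) := by
    have ht : ∫⁻ x : ℝ, G₁ (x - c₁) = ∫⁻ y : ℝ, G₁ y := by
      simp_rw [sub_eq_add_neg]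
      exact lintegral_add_right_eq_self G₁ (-c₁)
    rw [ht, hG₁]
    exact aux_lintegral hρ0 hρ (by linarith) hS0 (Real.rpow_nonneg (by positivity) _)
  have hO2 : ∫⁻ x : ℝ, G₂ (x - c₂) ≤
      ENNReal.ofReal (2 * ((S/2) ^ (-ρ) * S ^ (1 - γ) / (1 - γ)
        + S ^ (1 - (ρ + γ)) / ((ρ + γ) - 1))) := by
    have ht : ∫⁻ x : ℝ, G₂ (x - c₂) = ∫⁻ y : ℝ, G₂ y := by
      simp_rw [sub_eq_add_neg]
      exact lintegral_add_right_eq_self G₂ (-c₂)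
    rw [ht, hG₂]
    exact aux_lintegral hγ hγ1 (by linarith) hS0 (Real.rpow_nonneg (by positivity) _)
  have hT1nn : 0 ≤ 2 * ((S/2) ^ (-γ) * S ^ (1 - ρ) / (1 - ρ)
      + S ^ (1 - (ρ + γ)) / ((ρ + γ) - 1)) := by
    have := Real.rpow_nonneg (show (0:ℝ) ≤ S/2 by positivity) (-γ)
    have := Real.rpow_nonneg hS0.le (1 - ρ)
    have := Real.rpow_nonneg hS0.le (1 - (ρ + γ))
    positivity
  have hT2nn : 0 ≤ 2 * ((S/2) ^ (-ρ) * S ^ (1 - γ) / (1 - γ)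
      + S ^ (1 - (ρ + γ)) / ((ρ + γ) - 1)) := by
    positivity
  calc ∫⁻ x : ℝ, ENNReal.ofReal ((Real.sqrt (1 + (x - c₁) ^ 2)) ^ (-ρ)
        * (Real.sqrt (1 + (x - c₂) ^ 2)) ^ (-γ))
      ≤ ∫⁻ x : ℝ, (G₁ (x - c₁) + G₂ (x - c₂)) := lintegral_mono_ae hptwise
    _ = (∫⁻ x : ℝ, G₁ (x - c₁)) + ∫⁻ x : ℝ, G₂ (x - c₂) := lintegral_add_left hmeas₁ _
    _ ≤ ENNReal.ofReal (2 * ((S/2) ^ (-γ) * S ^ (1 - ρ) / (1 - ρ)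
          + S ^ (1 - (ρ + γ)) / ((ρ + γ) - 1)))
        + ENNReal.ofReal (2 * ((S/2) ^ (-ρ) * S ^ (1 - γ) / (1 - γ)
          + S ^ (1 - (ρ + γ)) / ((ρ + γ) - 1))) := add_le_add hO1 hO2
    _ = ENNReal.ofReal (2 * ((S/2) ^ (-γ) * S ^ (1 - ρ) / (1 - ρ)
          + S ^ (1 - (ρ + γ)) / ((ρ + γ) - 1))
        + 2 * ((S/2) ^ (-ρ) * S ^ (1 - γ) / (1 - γ)
          + S ^ (1 - (ρ + γ)) / ((ρ + γ) - 1))) := (ENNReal.ofReal_add hT1nn hT2nn).symm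
    _ ≤ ENNReal.ofReal (C * S ^ (-γ) * S ^ (1 - ρ)) := by
        apply ENNReal.ofReal_le_ofReal
        -- real arithmetic
        have hq1 : (S/2) ^ (-γ) ≤ 2 * S ^ (-γ) := by
          rw [Real.div_rpow hS0.le (by norm_num : (0:ℝ) ≤ 2), Real.rpow_neg (by norm_num : (0:ℝ) ≤ 2),
            div_eq_mul_inv, inv_inv]
          calc S ^ (-γ) * 2 ^ γ ≤ S ^ (-γ) * 2 := by
                apply mul_le_mul_of_nonneg_left ?_ (Real.rpow_nonneg hS0.le _)
                calc (2:ℝ) ^ γ ≤ 2 ^ (1:ℝ) :=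
                      Real.rpow_le_rpow_of_exponent_le one_le_two (by linarith)
                  _ = 2 := Real.rpow_one 2
            _ = 2 * S ^ (-γ) := mul_comm _ _
        have hq2 : (S/2) ^ (-ρ) ≤ 2 * S ^ (-ρ) := by
          rw [Real.div_rpow hS0.le (by norm_num : (0:ℝ) ≤ 2), Real.rpow_neg (by norm_num : (0:ℝ) ≤ 2),
            div_eq_mul_inv, inv_inv]
          calc S ^ (-ρ) * 2 ^ ρ ≤ S ^ (-ρ) * 2 := by
                apply mul_le_mul_of_nonneg_left ?_ (Real.rpow_nonneg hS0.le _)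
                calc (2:ℝ) ^ ρ ≤ 2 ^ (1:ℝ) :=
                      Real.rpow_le_rpow_of_exponent_le one_le_two (by linarith)
                  _ = 2 := Real.rpow_one 2
            _ = 2 * S ^ (-ρ) := mul_comm _ _
        have hE1 : S ^ (1 - (ρ + γ)) = S ^ (-γ) * S ^ (1 - ρ) := by
          rw [← Real.rpow_add hS0]
          congr 1; ring
        have hE2 : S ^ (-ρ) * S ^ (1 - γ) = S ^ (-γ) * S ^ (1 - ρ) := by
          rw [← Real.rpow_add hS0, ← Real.rpow_add hS0]
          congr 1; ring
        have hQ : 0 ≤ S ^ (1 - ρ) := Real.rpow_nonneg hS0.le _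
        have hR : 0 ≤ S ^ (1 - γ) := Real.rpow_nonneg hS0.le _
        have hAQ : (S/2) ^ (-γ) * S ^ (1 - ρ) ≤ 2 * (S ^ (-γ) * S ^ (1 - ρ)) := by
          have := mul_le_mul_of_nonneg_right hq1 hQ
          linarith
        have hDR : (S/2) ^ (-ρ) * S ^ (1 - γ) ≤ 2 * (S ^ (-γ) * S ^ (1 - ρ)) := by
          have := mul_le_mul_of_nonneg_right hq2 hR
          nlinarith [hE2]
        have t1 : (S/2) ^ (-γ) * S ^ (1 - ρ) / (1 - ρ)
            ≤ 2 * (S ^ (-γ) * S ^ (1 - ρ)) / (1 - ρ) := (div_le_div_iff_of_pos_right h1ρ).2 hAQ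
        have t2 : (S/2) ^ (-ρ) * S ^ (1 - γ) / (1 - γ)
            ≤ 2 * (S ^ (-γ) * S ^ (1 - ρ)) / (1 - γ) := (div_le_div_iff_of_pos_right h1γ).2 hDR
        have hrhs : C * S ^ (-γ) * S ^ (1 - ρ)
            = 2 * (2 * (S ^ (-γ) * S ^ (1 - ρ)) / (1 - ρ))
              + 2 * (2 * (S ^ (-γ) * S ^ (1 - ρ)) / (1 - γ))
              + 4 * (S ^ (-γ) * S ^ (1 - ρ) / (ρ + γ - 1)) := by
          rw [hC]; ring
        rw [hE1, hrhs]
        linarith [t1, t2]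
end

section
/- Let ρ = 1 and 0 ≤ γ ≤ 1 with 1 + γ > 1 (i.e. γ > 0). Then there is a constant C (depending only on γ) such that for all real c₁, c₂, ∫_ℝ ⟨x - c₁⟩^{-1} ⟨x - c₂⟩^{-γ} dx ≤ C ⟨c₁ - c₂⟩^{-γ} log(1 + ⟨c₁ - c₂⟩). -/
open MeasureTheory Real Set

noncomputable section

namespace Stmt2Aux

/-- `s t = √(1+t²)` -/
def s (t : ℝ) : ℝ := Real.sqrt (1 + t ^ 2)

lemma s_pos (t : ℝ) : 0 < s t := Real.sqrt_pos.mpr (by positivity)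

lemma one_le_s (t : ℝ) : 1 ≤ s t := by
  rw [show (1:ℝ) = Real.sqrt 1 by simp [Real.sqrt_one]]
  exact Real.sqrt_le_sqrt (by nlinarith [sq_nonneg t])

lemma abs_le_s (t : ℝ) : |t| ≤ s t := by
  rw [← Real.sqrt_sq_eq_abs]
  exact Real.sqrt_le_sqrt (by nlinarith)

lemma one_add_abs_le_two_s (t : ℝ) : 1 + |t| ≤ 2 * s t := by
  nlinarith [one_le_s t, abs_le_s t]

lemma s_mono {a b : ℝ} (h : |a| ≤ |b|) : s a ≤ s b :=
  Real.sqrt_le_sqrt (by nlinarith [mul_self_le_mul_self (abs_nonneg a) h, sq_abs a, sq_abs b])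

lemma s_half {d z : ℝ} (h : |d| / 2 ≤ |z|) : s d ≤ 2 * s z := by
  have h2 : (0:ℝ) ≤ 2 * s z := by have := s_pos z; linarith
  rw [show 2 * s z = Real.sqrt ((2 * s z) ^ 2) from (Real.sqrt_sq h2).symm]
  apply Real.sqrt_le_sqrt
  have e : (2 * s z) ^ 2 = 4 * (1 + z ^ 2) := by
    rw [mul_pow, s, Real.sq_sqrt (by positivity : (0:ℝ) ≤ 1 + z ^ 2)]; ring
  rw [e]
  nlinarith [mul_self_le_mul_self (by positivity : (0:ℝ) ≤ |d| / 2) h, sq_abs d, sq_abs z]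

lemma s_cont : Continuous s := (continuous_const.add (continuous_pow 2)).sqrt

lemma s_def (t : ℝ) : Real.sqrt (1 + t ^ 2) = s t := rfl

lemma s_neg (t : ℝ) : s (-t) = s t := by rw [s, s, neg_pow]; norm_num

lemma rpow_neg_anti {a b p : ℝ} (ha : 0 < a) (hab : a ≤ b) (hp : 0 ≤ p) :
    b ^ (-p) ≤ a ^ (-p) := by
  have hb : 0 < b := lt_of_lt_of_le ha hab
  rw [Real.rpow_neg hb.le, Real.rpow_neg ha.le]
  exact inv_anti₀ (Real.rpow_pos_of_pos ha p) (Real.rpow_le_rpow ha.le hab hp)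

lemma two_rpow_le {γ : ℝ} (hγ1 : γ ≤ 1) : (2:ℝ) ^ γ ≤ 2 := by
  calc (2:ℝ) ^ γ ≤ (2:ℝ) ^ (1:ℝ) := Real.rpow_le_rpow_of_exponent_le one_le_two hγ1
  _ = 2 := Real.rpow_one 2

lemma half_rpow_neg {x γ : ℝ} (hx : 0 < x) (hγ1 : γ ≤ 1) :
    (x / 2) ^ (-γ) ≤ 2 * x ^ (-γ) := by
  rw [div_eq_mul_inv, Real.mul_rpow hx.le (by norm_num), Real.inv_rpow (by norm_num : (0:ℝ) ≤ 2),
    ← Real.rpow_neg (by norm_num : (0:ℝ) ≤ 2), neg_neg]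
  calc x ^ (-γ) * (2:ℝ) ^ γ ≤ x ^ (-γ) * 2 :=
        mul_le_mul_of_nonneg_left (two_rpow_le hγ1) (Real.rpow_nonneg hx.le _)
    _ = 2 * x ^ (-γ) := mul_comm _ _

/-- the integrand, after translating by `c₁` -/
def g (a γ y : ℝ) : ℝ := s y ^ (-(1:ℝ)) * s (y + a) ^ (-γ)

lemma g_nonneg (a γ y : ℝ) : 0 ≤ g a γ y :=
  mul_nonneg (Real.rpow_nonneg (s_pos y).le _) (Real.rpow_nonneg (s_pos _).le _)

lemma g_cont (a γ : ℝ) : Continuous (g a γ) := by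
  apply Continuous.mul
  · exact s_cont.rpow_const fun y => Or.inl (s_pos y).ne'
  · exact (s_cont.comp (continuous_id.add continuous_const)).rpow_const
      fun y => Or.inl (s_pos _).ne'

lemma g_neg (a γ x : ℝ) : g a γ (-x) = g (-a) γ x := by
  have e1 : (1:ℝ) + (-x) ^ 2 = 1 + x ^ 2 := by ring
  have e2 : (1:ℝ) + (-x + a) ^ 2 = 1 + (x + -a) ^ 2 := by ring
  rw [g, g, s, s, s, s, e1, e2]

lemma core_ptwise {γ : ℝ} (hγ0 : 0 < γ) (hγ1 : γ ≤ 1) (a y : ℝ) :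
    g a γ y ≤ 4 * s a ^ (-γ) * ((1 + |y|)⁻¹ + (1 + |y + a|)⁻¹) := by
  have hsy := s_pos y
  have hsya := s_pos (y + a)
  have hsa := s_pos a
  have hfirst : s y ^ (-(1:ℝ)) = (s y)⁻¹ := Real.rpow_neg_one _
  rcases le_or_gt (|a| / 2) (|y + a|) with hc | hc
  · have h1 : s a ≤ 2 * s (y + a) := s_half hc
    have h2 : s (y + a) ^ (-γ) ≤ 2 * s a ^ (-γ) := by
      calc s (y + a) ^ (-γ) ≤ (s a / 2) ^ (-γ) :=
            rpow_neg_anti (by linarith) (by linarith) hγ0.le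
        _ ≤ 2 * s a ^ (-γ) := half_rpow_neg hsa hγ1
    have h3 : (s y)⁻¹ ≤ 2 * (1 + |y|)⁻¹ := by
      rw [show 2 * (1 + |y|)⁻¹ = ((1 + |y|) / 2)⁻¹ by rw [div_eq_mul_inv, mul_inv]; ring]
      apply inv_anti₀ (by positivity)
      have := one_add_abs_le_two_s y
      linarith
    have hmul : g a γ y ≤ (2 * (1 + |y|)⁻¹) * (2 * s a ^ (-γ)) := by
      rw [g, hfirst]
      exact mul_le_mul h3 h2 (Real.rpow_nonneg hsya.le _) (by positivity)
    have hpos : (0:ℝ) ≤ 4 * s a ^ (-γ) * (1 + |y + a|)⁻¹ := by positivity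
    nlinarith [hmul, hpos]
  · have hy : |a| / 2 ≤ |y| := by
      have : |a| ≤ |y + a| + |y| := by
        calc |a| = |(y + a) - y| := by ring_nf
          _ ≤ |y + a| + |y| := abs_sub _ _
      linarith
    have h1 : s a ≤ 2 * s y := s_half hy
    have h2 : (s y)⁻¹ ≤ 2 * (s a)⁻¹ := by
      rw [show 2 * (s a)⁻¹ = (s a / 2)⁻¹ by rw [div_eq_mul_inv, mul_inv]; ring]
      exact inv_anti₀ (by linarith) (by linarith)
    have hyaa : s (y + a) ≤ s a := s_mono (by linarith [abs_nonneg (y + a)] : |y + a| ≤ |a|)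
    have h3 : s (y + a) ^ (-γ) ≤ s a ^ (1 - γ) * (2 * (1 + |y + a|)⁻¹) := by
      have e : s (y + a) ^ (-γ) = s (y + a) ^ (1 - γ) * s (y + a) ^ (-(1:ℝ)) := by
        rw [← Real.rpow_add hsya]; ring_nf
      rw [e, Real.rpow_neg_one]
      apply mul_le_mul
      · exact Real.rpow_le_rpow hsya.le hyaa (by linarith)
      · rw [show 2 * (1 + |y + a|)⁻¹ = ((1 + |y + a|) / 2)⁻¹ by rw [div_eq_mul_inv, mul_inv]; ring]
        apply inv_anti₀ (by positivity)
        have := one_add_abs_le_two_s (y + a)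
        linarith
      · positivity
      · positivity
    have hmul : g a γ y ≤ (2 * (s a)⁻¹) * (s a ^ (1 - γ) * (2 * (1 + |y + a|)⁻¹)) := by
      rw [g, hfirst]
      exact mul_le_mul h2 h3 (Real.rpow_nonneg hsya.le _) (by positivity)
    have key : (s a)⁻¹ * s a ^ (1 - γ) = s a ^ (-γ) := by
      rw [← Real.rpow_neg_one (s a), ← Real.rpow_add hsa]; ring_nf
    have hpos : (0:ℝ) ≤ 4 * s a ^ (-γ) * (1 + |y|)⁻¹ := by positivity
    calc g a γ y ≤ (2 * (s a)⁻¹) * (s a ^ (1 - γ) * (2 * (1 + |y + a|)⁻¹)) := hmul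
      _ = 4 * ((s a)⁻¹ * s a ^ (1 - γ)) * (1 + |y + a|)⁻¹ := by ring
      _ = 4 * s a ^ (-γ) * (1 + |y + a|)⁻¹ := by rw [key]
      _ ≤ 4 * s a ^ (-γ) * ((1 + |y|)⁻¹ + (1 + |y + a|)⁻¹) := by nlinarith [hpos]

lemma tail_ptwise {γ : ℝ} (hγ0 : 0 < γ) (hγ1 : γ ≤ 1) (a y : ℝ)
    (hy : 2 * s a ≤ |y|) :
    g a γ y ≤ 2 * |y| ^ (-(1 + γ)) := by
  have hsy := s_pos y
  have hsya := s_pos (y + a)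
  have hsa := s_pos a
  have hay : |a| ≤ |y| / 2 := by have := abs_le_s a; linarith
  have hya : |y| / 2 ≤ |y + a| := by
    have : |y| ≤ |y + a| + |a| := by
      calc |y| = |(y + a) - a| := by ring_nf
        _ ≤ |y + a| + |a| := abs_sub _ _
    linarith
  have h1 : s y ≤ 2 * s (y + a) := s_half hya
  have h2 : s (y + a) ^ (-γ) ≤ 2 * s y ^ (-γ) := by
    calc s (y + a) ^ (-γ) ≤ (s y / 2) ^ (-γ) :=
          rpow_neg_anti (by linarith) (by linarith) hγ0.le
      _ ≤ 2 * s y ^ (-γ) := half_rpow_neg hsy hγ1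
  have hmul : g a γ y ≤ s y ^ (-(1:ℝ)) * (2 * s y ^ (-γ)) :=
    mul_le_mul_of_nonneg_left h2 (Real.rpow_nonneg hsy.le _)
  have key : s y ^ (-(1:ℝ)) * s y ^ (-γ) = s y ^ (-(1 + γ)) := by
    rw [← Real.rpow_add hsy]; ring_nf
  have habs : 0 < |y| := by linarith [s_pos a]
  have h3 : s y ^ (-(1 + γ)) ≤ |y| ^ (-(1 + γ)) :=
    rpow_neg_anti habs (abs_le_s y) (by linarith)
  calc g a γ y ≤ s y ^ (-(1:ℝ)) * (2 * s y ^ (-γ)) := hmul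
    _ = 2 * (s y ^ (-(1:ℝ)) * s y ^ (-γ)) := by ring
    _ = 2 * s y ^ (-(1 + γ)) := by rw [key]
    _ ≤ 2 * |y| ^ (-(1 + γ)) := by linarith

lemma cont_inv_abs (b : ℝ) : Continuous fun y : ℝ => (1 + |y - b|)⁻¹ := by
  apply Continuous.inv₀ (continuous_const.add ((continuous_id.sub continuous_const).abs))
  intro x; exact (by positivity : (0:ℝ) < 1 + |x - b|).ne'

lemma cont_inv_abs' (b : ℝ) : Continuous fun y : ℝ => (1 + |y + b|)⁻¹ := by
  apply Continuous.inv₀ (continuous_const.add ((continuous_id.add continuous_const).abs))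
  intro x; exact (by positivity : (0:ℝ) < 1 + |x + b|).ne'

lemma integral_inv_one_add_abs (r : ℝ) (hr : 0 ≤ r) :
    ∫ y in (-r)..r, (1 + |y|)⁻¹ = 2 * Real.log (1 + r) := by
  have h0 : ∫ y in (0:ℝ)..r, (1 + |y|)⁻¹ = Real.log (1 + r) := by
    have hcongr : ∫ y in (0:ℝ)..r, (1 + |y|)⁻¹ = ∫ y in (0:ℝ)..r, (1 + y)⁻¹ := by
      apply intervalIntegral.integral_congr
      intro x hx
      rw [uIcc_of_le hr] at hx
      simp only [abs_of_nonneg hx.1]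
    rw [hcongr]
    have := intervalIntegral.integral_comp_add_left (a := (0:ℝ)) (b := r)
      (f := fun u : ℝ => u⁻¹) 1
    rw [this, add_zero, integral_inv_of_pos one_pos (by linarith)]
    rw [div_one]
  have hneg : ∫ y in (-r)..(0:ℝ), (1 + |y|)⁻¹ = Real.log (1 + r) := by
    have := intervalIntegral.integral_comp_neg (a := (0:ℝ)) (b := r)
      (f := fun y : ℝ => (1 + |y|)⁻¹)
    simp only [abs_neg, neg_zero] at this
    rw [← this, h0]
  have hadd := intervalIntegral.integral_add_adjacent_intervals (μ := volume)
    (a := -r) (b := (0:ℝ)) (c := r) (f := fun y : ℝ => (1 + |y|)⁻¹)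
    ((by simpa using cont_inv_abs 0 : Continuous fun y : ℝ => (1 + |y|)⁻¹).intervalIntegrable _ _)
    ((by simpa using cont_inv_abs 0 : Continuous fun y : ℝ => (1 + |y|)⁻¹).intervalIntegrable _ _)
  rw [← hadd, h0, hneg]; ring

lemma integral_inv_one_add_abs_shift (b r : ℝ) (hr : 0 ≤ r) :
    ∫ y in (b - r)..(b + r), (1 + |y - b|)⁻¹ = 2 * Real.log (1 + r) := by
  have := intervalIntegral.integral_comp_sub_right (a := b - r) (b := b + r)
    (f := fun u : ℝ => (1 + |u|)⁻¹) b
  rw [this, show b - r - b = -r by ring, show b + r - b = r by ring,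
    integral_inv_one_add_abs r hr]

lemma setIntegral_inv_one_add_abs_shift (b r : ℝ) (hr : 0 ≤ r) :
    ∫ y in Ioc (b - r) (b + r), (1 + |y - b|)⁻¹ = 2 * Real.log (1 + r) := by
  rw [← intervalIntegral.integral_of_le (by linarith), integral_inv_one_add_abs_shift b r hr]

lemma setIntegral_Icc_inv_one_add_abs_shift (b r : ℝ) (hr : 0 ≤ r) :
    ∫ y in Icc (b - r) (b + r), (1 + |y - b|)⁻¹ = 2 * Real.log (1 + r) := by
  rw [MeasureTheory.integral_Icc_eq_integral_Ioc, setIntegral_inv_one_add_abs_shift b r hr]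

lemma tail_est {γ : ℝ} (hγ0 : 0 < γ) (hγ1 : γ ≤ 1) (a : ℝ) :
    IntegrableOn (g a γ) (Ioi (2 * s a)) ∧
      ∫ y in Ioi (2 * s a), g a γ y ≤ 2 * s a ^ (-γ) / γ := by
  set R := 2 * s a with hRdef
  have hR : 0 < R := by have := s_pos a; positivity
  have hexp : -(1 + γ) < -1 := by linarith
  have hmaj0 : IntegrableOn (fun y : ℝ => y ^ (-(1 + γ))) (Ioi R) :=
    integrableOn_Ioi_rpow_of_lt hexp hR
  have hmaj : IntegrableOn (fun y : ℝ => 2 * y ^ (-(1 + γ))) (Ioi R) := hmaj0.const_mul 2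
  have hptw : ∀ y ∈ Ioi R, g a γ y ≤ 2 * y ^ (-(1 + γ)) := by
    intro y hy
    have hyR : R < y := hy
    have := tail_ptwise hγ0 hγ1 a y (by rw [abs_of_pos (lt_trans hR hyR)]; linarith)
    rwa [abs_of_pos (lt_trans hR hyR)] at this
  have hint : IntegrableOn (g a γ) (Ioi R) := by
    apply hmaj.mono' (g_cont a γ).aestronglyMeasurable.restrict
    rw [ae_restrict_iff' measurableSet_Ioi]
    exact ae_of_all _ fun y hy => by
      rw [Real.norm_eq_abs, abs_of_nonneg (g_nonneg a γ y)]; exact hptw y hy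
  refine ⟨hint, ?_⟩
  have h1 : ∫ y in Ioi R, g a γ y ≤ ∫ y in Ioi R, 2 * y ^ (-(1 + γ)) :=
    setIntegral_mono_on hint hmaj measurableSet_Ioi hptw
  have h2 : ∫ y in Ioi R, 2 * y ^ (-(1 + γ)) = 2 * (R ^ (-γ) / γ) := by
    rw [MeasureTheory.integral_const_mul, integral_Ioi_rpow_of_lt hexp hR]
    rw [show -(1 + γ) + 1 = -γ by ring]
    rw [neg_div_neg_eq]
  have h3 : R ^ (-γ) ≤ s a ^ (-γ) :=
    rpow_neg_anti (s_pos a) (by have := s_pos a; linarith) hγ0.le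
  calc ∫ y in Ioi R, g a γ y ≤ 2 * (R ^ (-γ) / γ) := h1.trans h2.le
    _ ≤ 2 * (s a ^ (-γ) / γ) := by
        apply mul_le_mul_of_nonneg_left _ (by norm_num)
        exact (div_le_div_iff_of_pos_right hγ0).2 h3
    _ = 2 * s a ^ (-γ) / γ := by ring

lemma tail_est_neg {γ : ℝ} (hγ0 : 0 < γ) (hγ1 : γ ≤ 1) (a : ℝ) :
    IntegrableOn (g a γ) (Iic (-(2 * s a))) ∧
      ∫ y in Iic (-(2 * s a)), g a γ y ≤ 2 * s a ^ (-γ) / γ := by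
  obtain ⟨hint', hval'⟩ := tail_est hγ0 hγ1 (-a)
  rw [s_neg] at hint' hval'
  have hfun : (fun x : ℝ => g a γ (-x)) = g (-a) γ := funext fun x => g_neg a γ x
  constructor
  · have hIci : IntegrableOn (g (-a) γ) (Ici (2 * s a)) :=
      (integrableOn_Ici_iff_integrableOn_Ioi).2 hint'
    have := ((Measure.measurePreserving_neg (volume : Measure ℝ)).integrableOn_comp_preimage
      (Homeomorph.neg ℝ).measurableEmbedding).2 hIci
    have hset : (Neg.neg ⁻¹' Ici (2 * s a) : Set ℝ) = Iic (-(2 * s a)) := by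
      ext x; simp [mem_Ici, mem_Iic]
    have hcomp : (g (-a) γ) ∘ Neg.neg = g a γ := by
      funext x; simp only [Function.comp_apply]
      rw [g_neg (-a) γ x, neg_neg]
    rwa [hset, hcomp] at this
  · have heq := integral_comp_neg_Ioi (2 * s a) (g a γ)
    rw [← heq]
    calc ∫ x in Ioi (2 * s a), g a γ (-x)
        = ∫ x in Ioi (2 * s a), g (-a) γ x := by rw [hfun]
      _ ≤ 2 * s a ^ (-γ) / γ := hval'

end Stmt2Aux

set_option maxHeartbeats 2000000 in
open Stmt2Aux in
theorem stmt_2 (γ : ℝ) (hγ0 : 0 < γ) (hγ1 : γ ≤ 1) :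
    ∃ C : ℝ, 0 < C ∧ ∀ c₁ c₂ : ℝ,
      (∫ x : ℝ, (Real.sqrt (1 + (x - c₁) ^ 2)) ^ (-(1 : ℝ)) * (Real.sqrt (1 + (x - c₂) ^ 2)) ^ (-γ))
        ≤ C * (Real.sqrt (1 + (c₁ - c₂) ^ 2)) ^ (-γ)
            * Real.log (1 + Real.sqrt (1 + (c₁ - c₂) ^ 2)) := by
  refine ⟨48 + 8 / γ, add_pos (by norm_num) (div_pos (by norm_num) hγ0), fun c₁ c₂ => ?_⟩
  simp only [s_def]
  set a : ℝ := c₁ - c₂ with ha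
  set D : ℝ := s a with hDdef
  have hD0 : 0 < D := s_pos a
  have hD1 : 1 ≤ D := one_le_s a
  have haD : |a| ≤ D := abs_le_s a
  set R : ℝ := 2 * D with hRdef
  set L : ℝ := Real.log (1 + D) with hLdef
  have hL : 1 / 2 ≤ L := by
    have h1 : Real.log 2 ≤ L := Real.log_le_log (by norm_num) (by linarith)
    have h2 : (0.6931471803 : ℝ) < Real.log 2 := Real.log_two_gt_d9
    linarith
  -- substitution
  have hsub : (∫ x : ℝ, s (x - c₁) ^ (-(1 : ℝ)) * s (x - c₂) ^ (-γ)) = ∫ y : ℝ, g a γ y := by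
    rw [← integral_sub_right_eq_self (g a γ) c₁]
    congr 1
    funext x
    rw [g, show x - c₁ + a = x - c₂ by rw [ha]; ring]
  rw [hsub]
  -- tail pieces
  obtain ⟨hT3int, hT3⟩ := tail_est hγ0 hγ1 a
  obtain ⟨hT1int, hT1⟩ := tail_est_neg hγ0 hγ1 a
  rw [← hRdef] at hT3int hT3 hT1int hT1
  -- core piece
  have hcore_int : IntegrableOn (g a γ) (Ioc (-R) R) :=
    ((g_cont a γ).integrableOn_Icc).mono_set Ioc_subset_Icc_self
  set F : ℝ → ℝ := fun y => 4 * D ^ (-γ) * ((1 + |y|)⁻¹ + (1 + |y + a|)⁻¹) with hFdef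
  have hFcont : Continuous F := by
    apply Continuous.mul continuous_const
    exact ((by simpa using cont_inv_abs 0 : Continuous fun y : ℝ => (1 + |y|)⁻¹).add
      (cont_inv_abs' a))
  have hFint : IntegrableOn F (Ioc (-R) R) :=
    (hFcont.integrableOn_Icc).mono_set Ioc_subset_Icc_self
  have hcore_le : ∫ y in Ioc (-R) R, g a γ y ≤ ∫ y in Ioc (-R) R, F y :=
    setIntegral_mono_on hcore_int hFint measurableSet_Ioc
      (fun y _ => core_ptwise hγ0 hγ1 a y)
  have hint1 : IntegrableOn (fun y : ℝ => (1 + |y|)⁻¹) (Ioc (-R) R) :=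
    (((by simpa using cont_inv_abs 0 : Continuous fun y : ℝ =>
      (1 + |y|)⁻¹)).integrableOn_Icc).mono_set Ioc_subset_Icc_self
  have hint2 : IntegrableOn (fun y : ℝ => (1 + |y + a|)⁻¹) (Ioc (-R) R) :=
    ((cont_inv_abs' a).integrableOn_Icc).mono_set Ioc_subset_Icc_self
  have hval1 : ∫ y in Ioc (-R) R, (1 + |y|)⁻¹ = 2 * Real.log (1 + R) := by
    have := setIntegral_inv_one_add_abs_shift 0 R (by positivity)
    simpa using this
  have hval2 : ∫ y in Ioc (-R) R, (1 + |y + a|)⁻¹ ≤ 2 * Real.log (1 + 3 * D) := by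
    have hbig : IntegrableOn (fun y : ℝ => (1 + |y + a|)⁻¹)
        (Icc (-a - 3 * D) (-a + 3 * D)) := (cont_inv_abs' a).integrableOn_Icc
    have hsubset : Ioc (-R) R ⊆ Icc (-a - 3 * D) (-a + 3 * D) := by
      intro y hy
      have h1 : |y| ≤ R := abs_le.2 ⟨hy.1.le, hy.2⟩
      have h2 : |y + a| ≤ 3 * D := by
        calc |y + a| ≤ |y| + |a| := abs_add_le _ _
          _ ≤ 3 * D := by rw [hRdef] at h1; linarith
      obtain ⟨h3, h4⟩ := abs_le.1 h2
      exact ⟨by linarith, by linarith⟩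
    have hmono := setIntegral_mono_set hbig
      (ae_of_all _ fun y => by positivity) (HasSubset.Subset.eventuallyLE hsubset)
    have hvalbig : ∫ y in Icc (-a - 3 * D) (-a + 3 * D), (1 + |y + a|)⁻¹
        = 2 * Real.log (1 + 3 * D) := by
      have := setIntegral_Icc_inv_one_add_abs_shift (-a) (3 * D) (by positivity)
      simpa [sub_neg_eq_add, sub_eq_add_neg, add_comm] using this
    calc ∫ y in Ioc (-R) R, (1 + |y + a|)⁻¹
        ≤ ∫ y in Icc (-a - 3 * D) (-a + 3 * D), (1 + |y + a|)⁻¹ := hmono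
      _ = 2 * Real.log (1 + 3 * D) := hvalbig
  have hlog1 : Real.log (1 + R) ≤ 2 * L := by
    have h1 : (1 : ℝ) + R ≤ (1 + D) ^ 2 := by rw [hRdef]; nlinarith
    calc Real.log (1 + R) ≤ Real.log ((1 + D) ^ 2) :=
          Real.log_le_log (by positivity) h1
      _ = 2 * L := by rw [Real.log_pow]; push_cast; ring
  have hlog2 : Real.log (1 + 3 * D) ≤ 3 * L := by
    have h1 : (1 : ℝ) + 3 * D ≤ (1 + D) ^ 3 := by nlinarith [hD0.le, mul_nonneg hD0.le hD0.le, mul_nonneg (mul_nonneg hD0.le hD0.le) hD0.le]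
    calc Real.log (1 + 3 * D) ≤ Real.log ((1 + D) ^ 3) :=
          Real.log_le_log (by positivity) h1
      _ = 3 * L := by rw [Real.log_pow]; push_cast; ring
  set B : ℝ := D ^ (-γ) with hBdef
  have hB : 0 < B := Real.rpow_pos_of_pos hD0 _
  have hcore_val : ∫ y in Ioc (-R) R, F y ≤ 40 * B * L := by
    have hsplit : ∫ y in Ioc (-R) R, F y
        = 4 * B * ((∫ y in Ioc (-R) R, (1 + |y|)⁻¹) + ∫ y in Ioc (-R) R, (1 + |y + a|)⁻¹) := by
      rw [hFdef]
      rw [MeasureTheory.integral_const_mul, integral_add hint1 hint2]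
    rw [hsplit, hval1]
    have : 2 * Real.log (1 + R) + ∫ y in Ioc (-R) R, (1 + |y + a|)⁻¹
        ≤ 2 * (2 * L) + 2 * (3 * L) := by
      have := hval2.trans (by linarith : 2 * Real.log (1 + 3 * D) ≤ 2 * (3 * L))
      linarith
    nlinarith [hB, this, hL]
  have hT2 : ∫ y in Ioc (-R) R, g a γ y ≤ 40 * B * L := hcore_le.trans hcore_val
  -- assemble
  have h23int : IntegrableOn (g a γ) (Ioi (-R)) := by
    rw [← Ioc_union_Ioi_eq_Ioi (by linarith : -R ≤ R)]
    exact hcore_int.union hT3int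
  have hsplit2 : ∫ y in Ioi (-R), g a γ y
      = (∫ y in Ioc (-R) R, g a γ y) + ∫ y in Ioi R, g a γ y := by
    rw [← setIntegral_union (Ioc_disjoint_Ioi le_rfl) measurableSet_Ioi hcore_int hT3int,
      Ioc_union_Ioi_eq_Ioi (by linarith : -R ≤ R)]
  have htotal : ∫ y : ℝ, g a γ y
      = (∫ y in Iic (-R), g a γ y) + ((∫ y in Ioc (-R) R, g a γ y) + ∫ y in Ioi R, g a γ y) := by
    rw [← hsplit2, intervalIntegral.integral_Iic_add_Ioi hT1int h23int]
  rw [htotal]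
  have hRHS : (48 + 8 / γ) * B * L = 48 * (B * L) + 8 * (B * L) / γ := by
    field_simp
  have hBL : 0 < B * L := mul_pos hB (by linarith)
  have htail_combine : 2 * B / γ ≤ 4 * (B * L) / γ := by
    apply (div_le_div_iff_of_pos_right hγ0).2
    nlinarith [hB, hL]
  rw [hRHS]
  have h8 : 8 * (B * L) / γ = 2 * (4 * (B * L) / γ) := by ring
  have hfinal : (∫ y in Iic (-R), g a γ y) + ((∫ y in Ioc (-R) R, g a γ y)
      + ∫ y in Ioi R, g a γ y) ≤ 40 * B * L + 2 * (4 * (B * L) / γ) := by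
    linarith [hT1.trans htail_combine, hT3.trans htail_combine, hT2]
  calc (∫ y in Iic (-R), g a γ y) + ((∫ y in Ioc (-R) R, g a γ y) + ∫ y in Ioi R, g a γ y)
      ≤ 40 * B * L + 2 * (4 * (B * L) / γ) := hfinal
    _ ≤ 48 * (B * L) + 8 * (B * L) / γ := by rw [h8]; nlinarith [hBL]
end
end

section
/- Let p > 1 and c₀, c₁, c₂ ∈ ℝ with c₂ ≠ 0. Then there is a constant C depending only on p such that ∫_ℝ ⟨c₂ x² + c₁ x + c₀⟩^{-p} dx ≤ C |c₂|^{-1/2} ⟨c₀ - c₁²/(4c₂)⟩^{-1/2}. -/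
open MeasureTheory Real

lemma intIp {p : ℝ} (hp : 1 < p) : Integrable (fun y : ℝ => (1 + |y|) ^ (-p)) := by
  have := integrable_one_add_norm (E := ℝ) (μ := volume) (r := p) (by simpa using hp)
  simpa [Real.norm_eq_abs] using this

lemma intJp {p : ℝ} (hp : 1 < p) : Integrable (fun y : ℝ => (max 1 |y|) ^ (-p)) := by
  refine ((intIp hp).const_mul ((2:ℝ) ^ p)).mono' ?_ ?_
  · apply Continuous.aestronglyMeasurable
    apply Continuous.rpow_const (continuous_const.max continuous_abs)
    intro x; left; positivity
  · filter_upwards with y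
    have h1 : (0:ℝ) < max 1 |y| := lt_of_lt_of_le one_pos (le_max_left _ _)
    rw [Real.norm_eq_abs, abs_of_nonneg (Real.rpow_nonneg h1.le _)]
    have h2 : (1 + |y|) / 2 ≤ max 1 |y| := by
      rcases le_total 1 |y| with h | h
      · rw [max_eq_right h]; linarith
      · rw [max_eq_left h]; linarith
    have h3 : (0:ℝ) < (1 + |y|) / 2 := by positivity
    have := Real.rpow_le_rpow_of_nonpos h3 h2 (neg_nonpos.2 (by linarith : (0:ℝ) ≤ p))
    calc (max 1 |y|) ^ (-p) ≤ ((1 + |y|) / 2) ^ (-p) := this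
      _ = (2:ℝ) ^ p * (1 + |y|) ^ (-p) := by
          rw [Real.div_rpow (by positivity) (by norm_num), Real.rpow_neg (by norm_num : (0:ℝ) ≤ 2)]
          rw [inv_eq_one_div]; field_simp [mul_comm]

-- pointwise bound for case d ≥ -2
set_option maxHeartbeats 1000000 in
lemma ptA {d y : ℝ} (hd : -2 ≤ d) :
    (1 + d ^ 2) ^ ((1:ℝ)/4) * (1 + |y|) / 8 ≤ Real.sqrt (1 + (y ^ 2 + d) ^ 2) := by
  have hB : (0:ℝ) ≤ (1 + d ^ 2) ^ ((1:ℝ)/4) * (1 + |y|) / 8 := by positivity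
  have h4 : ((1 + d ^ 2) ^ ((1:ℝ)/4)) ^ 2 = Real.sqrt (1 + d ^ 2) := by
    rw [← Real.rpow_natCast ((1 + d ^ 2) ^ ((1:ℝ)/4)) 2, ← Real.rpow_mul (by positivity),
      Real.sqrt_eq_rpow]
    norm_num
  have key : ((1 + d ^ 2) ^ ((1:ℝ)/4) * (1 + |y|) / 8) ^ 2 ≤ 1 + (y ^ 2 + d) ^ 2 := by
    have hexp : ((1 + d ^ 2) ^ ((1:ℝ)/4) * (1 + |y|) / 8) ^ 2
        = Real.sqrt (1 + d ^ 2) * (1 + |y|) ^ 2 / 64 := by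
      field_simp; nlinarith [h4]
    rw [hexp]
    set s := Real.sqrt (1 + d ^ 2) with hs
    have hs0 : 0 ≤ s := Real.sqrt_nonneg _
    have hyy : |y| ^ 2 = y ^ 2 := sq_abs y
    have hy0 : 0 ≤ |y| := abs_nonneg y
    rcases le_or_gt 0 d with h | h
    · have hsle : s ≤ 1 + d := by
        rw [hs, show (1:ℝ) + d = Real.sqrt ((1 + d) ^ 2) by rw [Real.sqrt_sq (by linarith)]]
        exact Real.sqrt_le_sqrt (by nlinarith)
      nlinarith [sq_nonneg (|y| ^ 2 - 1), sq_nonneg (d - 1), sq_nonneg (d - |y| ^ 2),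
        sq_nonneg (|y| - 1), mul_nonneg (mul_nonneg hy0 hy0) (mul_nonneg hy0 hy0),
        mul_nonneg h hy0, mul_nonneg h (mul_nonneg hy0 hy0)]
    · have hsle : s ≤ 3 := by
        rw [hs, show (3:ℝ) = Real.sqrt (3 ^ 2) by rw [Real.sqrt_sq (by norm_num)]]
        exact Real.sqrt_le_sqrt (by nlinarith)
      rcases le_or_gt |y| 3 with ht | ht
      · nlinarith [sq_nonneg (y ^ 2 + d), sq_nonneg (|y| - 3), mul_nonneg hy0 hy0]
      · have ha : 1 + |y| ≤ |y| ^ 2 - 2 := by nlinarith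
        have hb : |y| ^ 2 - 2 ≤ y ^ 2 + d := by nlinarith
        have h9 : 9 < |y| ^ 2 := by nlinarith
        have hd1 : (0:ℝ) ≤ y ^ 2 + d - (1 + |y|) := by linarith
        have hd2 : (0:ℝ) ≤ y ^ 2 + d + (1 + |y|) := by nlinarith
        have hc : (1 + |y|) ^ 2 ≤ (y ^ 2 + d) ^ 2 := by nlinarith [mul_nonneg hd1 hd2]
        nlinarith [hc, sq_nonneg (1 + |y|)]
  calc (1 + d ^ 2) ^ ((1:ℝ)/4) * (1 + |y|) / 8
      = Real.sqrt (((1 + d ^ 2) ^ ((1:ℝ)/4) * (1 + |y|) / 8) ^ 2) := (Real.sqrt_sq hB).symm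
    _ ≤ Real.sqrt (1 + (y ^ 2 + d) ^ 2) := Real.sqrt_le_sqrt key

-- case d < -2 pointwise: for y ≥ 0
lemma ptB {d y : ℝ} (hd : d < -2) (hy : 0 ≤ y) :
    max 1 |Real.sqrt (-d) * y - Real.sqrt (-d) ^ 2| ≤ Real.sqrt (1 + (y ^ 2 + d) ^ 2) := by
  set m := Real.sqrt (-d) with hm
  have hm2 : m ^ 2 = -d := Real.sq_sqrt (by linarith)
  have hm0 : 0 < m := Real.sqrt_pos.2 (by linarith)
  have h1 : (1:ℝ) ≤ Real.sqrt (1 + (y ^ 2 + d) ^ 2) := by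
    have := Real.sqrt_le_sqrt (show (1:ℝ) ≤ 1 + (y ^ 2 + d) ^ 2 by nlinarith [sq_nonneg (y ^ 2 + d)])
    rwa [Real.sqrt_one] at this
  refine max_le h1 ?_
  have habs : |y ^ 2 + d| ≤ Real.sqrt (1 + (y ^ 2 + d) ^ 2) := by
    rw [← Real.sqrt_sq_eq_abs]
    exact Real.sqrt_le_sqrt (by linarith)
  refine le_trans ?_ habs
  have e1 : |m * y - m ^ 2| = m * |y - m| := by
    rw [show m * y - m ^ 2 = m * (y - m) by ring, abs_mul, abs_of_pos hm0]
  have e2 : |y ^ 2 + d| = (y + m) * |y - m| := by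
    rw [show y ^ 2 + d = (y + m) * (y - m) by nlinarith [hm2], abs_mul,
      abs_of_nonneg (by positivity : (0:ℝ) ≤ y + m)]
  rw [e1, e2]
  exact mul_le_mul_of_nonneg_right (by linarith) (abs_nonneg _)

set_option maxHeartbeats 1000000 in
theorem coreLemma {p : ℝ} (hp : 1 < p) (d : ℝ)
    (intIp : Integrable (fun y : ℝ => (1 + |y|) ^ (-p)))
    (intJp : Integrable (fun y : ℝ => (max 1 |y|) ^ (-p)))
    (ptA : ∀ {d y : ℝ}, -2 ≤ d →
      (1 + d ^ 2) ^ ((1:ℝ)/4) * (1 + |y|) / 8 ≤ Real.sqrt (1 + (y ^ 2 + d) ^ 2))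
    (ptB : ∀ {d y : ℝ}, d < -2 → 0 ≤ y →
      max 1 |Real.sqrt (-d) * y - Real.sqrt (-d) ^ 2| ≤ Real.sqrt (1 + (y ^ 2 + d) ^ 2)) :
    (∫ y : ℝ, Real.sqrt (1 + (y ^ 2 + d) ^ 2) ^ (-p))
      ≤ ((8:ℝ) ^ p * (∫ y : ℝ, (1 + |y|) ^ (-p)) + 5 * (∫ y : ℝ, (max 1 |y|) ^ (-p)) + 1)
        * (1 + d ^ 2) ^ (-((1:ℝ)/4)) := by
  set Ip := ∫ y : ℝ, (1 + |y|) ^ (-p) with hIpdef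
  set Jp := ∫ y : ℝ, (max 1 |y|) ^ (-p) with hJpdef
  have hIp : 0 ≤ Ip := integral_nonneg fun y => Real.rpow_nonneg (by positivity) _
  have hJp : 0 ≤ Jp := integral_nonneg fun y => Real.rpow_nonneg (by positivity) _
  have hgnn : ∀ y : ℝ, 0 ≤ Real.sqrt (1 + (y ^ 2 + d) ^ 2) ^ (-p) :=
    fun y => Real.rpow_nonneg (Real.sqrt_nonneg _) _
  have h8p : (0:ℝ) < 8 ^ p := Real.rpow_pos_of_pos (by norm_num) _
  have hpos4 : (0:ℝ) < (1 + d ^ 2) ^ (-((1:ℝ)/4)) := Real.rpow_pos_of_pos (by positivity) _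
  rcases le_or_gt (-2) d with hd | hd
  · -- case d ≥ -2
    have hpt : ∀ y : ℝ, Real.sqrt (1 + (y ^ 2 + d) ^ 2) ^ (-p)
        ≤ 8 ^ p * (1 + d ^ 2) ^ (-((1:ℝ)/4)) * ((1 + |y|) ^ (-p)) := by
      intro y
      have hB : (0:ℝ) < (1 + d ^ 2) ^ ((1:ℝ)/4) * (1 + |y|) / 8 := by positivity
      have h1 := Real.rpow_le_rpow_of_nonpos hB (ptA (y := y) hd) (by linarith : -p ≤ 0)
      refine le_trans h1 ?_
      have e1 : ((1 + d ^ 2) ^ ((1:ℝ)/4) * (1 + |y|) / 8) ^ (-p)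
          = 8 ^ p * (1 + d ^ 2) ^ ((1:ℝ)/4 * -p) * (1 + |y|) ^ (-p) := by
        rw [Real.div_rpow (by positivity) (by norm_num),
          Real.mul_rpow (by positivity) (by positivity),
          Real.rpow_neg (by norm_num : (0:ℝ) ≤ 8), ← Real.rpow_mul (by positivity)]
        field_simp
      rw [e1]
      have h2 := Real.rpow_le_rpow_of_exponent_le
        (show (1:ℝ) ≤ 1 + d ^ 2 by nlinarith [sq_nonneg d])
        (show (1:ℝ)/4 * -p ≤ -((1:ℝ)/4) by linarith)
      exact mul_le_mul_of_nonneg_right (mul_le_mul_of_nonneg_left h2 h8p.le)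
        (Real.rpow_nonneg (by positivity) _)
    calc (∫ y : ℝ, Real.sqrt (1 + (y ^ 2 + d) ^ 2) ^ (-p))
        ≤ ∫ y : ℝ, 8 ^ p * (1 + d ^ 2) ^ (-((1:ℝ)/4)) * ((1 + |y|) ^ (-p)) :=
          integral_mono_of_nonneg (Filter.Eventually.of_forall hgnn)
            (intIp.const_mul _) (Filter.Eventually.of_forall hpt)
      _ = 8 ^ p * (1 + d ^ 2) ^ (-((1:ℝ)/4)) * Ip := integral_const_mul _ _
      _ ≤ (8 ^ p * Ip + 5 * Jp + 1) * (1 + d ^ 2) ^ (-((1:ℝ)/4)) := by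
          nlinarith [mul_nonneg (by linarith : (0:ℝ) ≤ 5 * Jp + 1) hpos4.le]
  · -- case d < -2
    set m := Real.sqrt (-d) with hm
    have hm2 : m ^ 2 = -d := Real.sq_sqrt (by linarith)
    have hm0 : 0 < m := Real.sqrt_pos.2 (by linarith)
    have hm1 : 1 < m := by nlinarith
    have i1 : Integrable (fun y : ℝ => (max 1 |m * y - m ^ 2|) ^ (-p)) := by
      have a1 : Integrable (fun z : ℝ => (max 1 |z - m ^ 2|) ^ (-p)) :=
        intJp.comp_sub_right (m ^ 2)
      have a2 := a1.comp_mul_left' (ne_of_gt hm0)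
      simpa using a2
    have i2 : Integrable (fun y : ℝ => (max 1 |m * y + m ^ 2|) ^ (-p)) := by
      have a1 : Integrable (fun z : ℝ => (max 1 |z - -(m ^ 2)|) ^ (-p)) :=
        intJp.comp_sub_right (-(m ^ 2))
      have a2 := a1.comp_mul_left' (ne_of_gt hm0)
      simpa [sub_neg_eq_add] using a2
    have hpt : ∀ y : ℝ, Real.sqrt (1 + (y ^ 2 + d) ^ 2) ^ (-p)
        ≤ (max 1 |m * y - m ^ 2|) ^ (-p) + (max 1 |m * y + m ^ 2|) ^ (-p) := by
      intro y
      rcases le_total 0 y with hy | hy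
      · have hb := ptB hd hy
        have h1 := Real.rpow_le_rpow_of_nonpos
          (lt_of_lt_of_le one_pos (le_max_left _ _)) hb (by linarith : -p ≤ 0)
        exact le_add_of_le_of_nonneg h1 (Real.rpow_nonneg (by positivity) _)
      · have hb := ptB (y := -y) hd (by linarith)
        have e : max 1 |m * -y - m ^ 2| = max 1 |m * y + m ^ 2| := by
          rw [show m * -y - m ^ 2 = -(m * y + m ^ 2) by ring, abs_neg]
        have e2 : (-y : ℝ) ^ 2 = y ^ 2 := by ring
        rw [e, e2] at hb
        have h1 := Real.rpow_le_rpow_of_nonpos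
          (lt_of_lt_of_le one_pos (le_max_left _ _)) hb (by linarith : -p ≤ 0)
        exact le_add_of_nonneg_of_le (Real.rpow_nonneg (by positivity) _) h1
    have e1 : (∫ y : ℝ, (max 1 |m * y - m ^ 2|) ^ (-p)) = Jp / m := by
      have t1 := MeasureTheory.Measure.integral_comp_mul_left
        (fun z : ℝ => (max 1 |z - m ^ 2|) ^ (-p)) m
      have t2 : (∫ z : ℝ, (max 1 |z - m ^ 2|) ^ (-p)) = Jp := by
        have := integral_sub_right_eq_self (μ := volume)
          (fun z : ℝ => (max 1 |z|) ^ (-p)) (m ^ 2)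
        simpa using this
      rw [t2] at t1
      calc (∫ y : ℝ, (max 1 |m * y - m ^ 2|) ^ (-p)) = |m⁻¹| • Jp := t1
        _ = Jp / m := by
            rw [abs_of_pos (inv_pos.2 hm0), smul_eq_mul]
            field_simp
    have e2 : (∫ y : ℝ, (max 1 |m * y + m ^ 2|) ^ (-p)) = Jp / m := by
      have t1 := MeasureTheory.Measure.integral_comp_mul_left
        (fun z : ℝ => (max 1 |z + m ^ 2|) ^ (-p)) m
      have t2 : (∫ z : ℝ, (max 1 |z + m ^ 2|) ^ (-p)) = Jp := by
        have := integral_add_right_eq_self (μ := volume)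
          (fun z : ℝ => (max 1 |z|) ^ (-p)) (m ^ 2)
        simpa using this
      rw [t2] at t1
      calc (∫ y : ℝ, (max 1 |m * y + m ^ 2|) ^ (-p)) = |m⁻¹| • Jp := t1
        _ = Jp / m := by
            rw [abs_of_pos (inv_pos.2 hm0), smul_eq_mul]
            field_simp
    have hu0 : (0:ℝ) < (1 + d ^ 2) ^ ((1:ℝ)/4) := Real.rpow_pos_of_pos (by positivity) _
    have hu : (1 + d ^ 2) ^ ((1:ℝ)/4) ≤ 2 * m := by
      have h16 : 1 + d ^ 2 ≤ (2 * m) ^ 4 := by nlinarith [hm2, hd]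
      calc (1 + d ^ 2) ^ ((1:ℝ)/4) ≤ ((2 * m) ^ 4) ^ ((1:ℝ)/4) :=
            Real.rpow_le_rpow (by positivity) h16 (by norm_num)
        _ = 2 * m := by
            rw [← Real.rpow_natCast (2 * m) 4, ← Real.rpow_mul (by positivity)]
            norm_num
    calc (∫ y : ℝ, Real.sqrt (1 + (y ^ 2 + d) ^ 2) ^ (-p))
        ≤ ∫ y : ℝ, ((max 1 |m * y - m ^ 2|) ^ (-p) + (max 1 |m * y + m ^ 2|) ^ (-p)) :=
          integral_mono_of_nonneg (Filter.Eventually.of_forall hgnn) (i1.add i2)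
            (Filter.Eventually.of_forall hpt)
      _ = Jp / m + Jp / m := by rw [integral_add i1 i2, e1, e2]
      _ = 2 * Jp / m := by ring
      _ ≤ (8 ^ p * Ip + 5 * Jp + 1) * (1 + d ^ 2) ^ (-((1:ℝ)/4)) := by
          rw [Real.rpow_neg (by positivity), ← div_eq_mul_inv,
            div_le_div_iff₀ hm0 hu0]
          nlinarith [mul_le_mul_of_nonneg_left hu (by linarith : (0:ℝ) ≤ 2 * Jp),
            mul_nonneg (mul_nonneg h8p.le hIp) hm0.le, mul_nonneg hJp hm0.le, hm0]

theorem stmt_3 (p : ℝ) (hp : 1 < p) :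
    ∃ C : ℝ, 0 < C ∧ ∀ c₀ c₁ c₂ : ℝ, c₂ ≠ 0 →
      (∫ x : ℝ, (Real.sqrt (1 + (c₂ * x ^ 2 + c₁ * x + c₀) ^ 2)) ^ (-p))
        ≤ C * |c₂| ^ (-(1 / 2 : ℝ))
            * (Real.sqrt (1 + (c₀ - c₁ ^ 2 / (4 * c₂)) ^ 2)) ^ (-(1 / 2 : ℝ)) := by
  have core : ∀ d : ℝ, (∫ y : ℝ, Real.sqrt (1 + (y ^ 2 + d) ^ 2) ^ (-p))
      ≤ ((8:ℝ) ^ p * (∫ y : ℝ, (1 + |y|) ^ (-p)) + 5 * (∫ y : ℝ, (max 1 |y|) ^ (-p)) + 1)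
        * (1 + d ^ 2) ^ (-((1:ℝ)/4)) :=
    fun d => coreLemma hp d (intIp hp) (intJp hp)
      (fun {d y} hd => ptA hd) (fun {d y} h1 h2 => ptB h1 h2)

  set Ip := ∫ y : ℝ, (1 + |y|) ^ (-p) with hIpdef
  set Jp := ∫ y : ℝ, (max 1 |y|) ^ (-p) with hJpdef
  have hIp : 0 ≤ Ip := integral_nonneg fun y => Real.rpow_nonneg (by positivity) _
  have hJp : 0 ≤ Jp := integral_nonneg fun y => Real.rpow_nonneg (by positivity) _
  have h8p : (0:ℝ) < 8 ^ p := Real.rpow_pos_of_pos (by norm_num) _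
  refine ⟨8 ^ p * Ip + 5 * Jp + 1, by nlinarith, ?_⟩
  intro c₀ c₁ c₂ hc₂
  set C := (8:ℝ) ^ p * Ip + 5 * Jp + 1 with hC
  set b := c₁ / (2 * c₂) with hb
  set dd := c₀ - c₁ ^ 2 / (4 * c₂) with hdd
  set s := |c₂| ^ (-(1 / 2 : ℝ)) with hs
  have habs : (0:ℝ) < |c₂| := abs_pos.2 hc₂
  have hs0 : 0 < s := Real.rpow_pos_of_pos habs _
  have hs2 : s ^ 2 = |c₂|⁻¹ := by
    rw [hs, ← Real.rpow_natCast (|c₂| ^ (-(1 / 2 : ℝ))) 2, ← Real.rpow_mul habs.le]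
    norm_num
    exact Real.rpow_neg_one _
  set ε := c₂ * s ^ 2 with hε
  have hε2 : ε ^ 2 = 1 := by
    rw [hε, hs2]
    rw [mul_pow, ← sq_abs c₂]
    field_simp
  have E0 : (∫ x : ℝ, (Real.sqrt (1 + (c₂ * x ^ 2 + c₁ * x + c₀) ^ 2)) ^ (-p))
      = ∫ x : ℝ, (Real.sqrt (1 + (c₂ * (x + b) ^ 2 + dd) ^ 2)) ^ (-p) := by
    congr 1
    funext x
    have : c₂ * (x + b) ^ 2 + dd = c₂ * x ^ 2 + c₁ * x + c₀ := by
      rw [hb, hdd]; field_simp; ring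
    rw [this]
  have E1 : (∫ x : ℝ, (Real.sqrt (1 + (c₂ * (x + b) ^ 2 + dd) ^ 2)) ^ (-p))
      = ∫ x : ℝ, (Real.sqrt (1 + (c₂ * x ^ 2 + dd) ^ 2)) ^ (-p) :=
    integral_add_right_eq_self (μ := volume)
      (fun x : ℝ => (Real.sqrt (1 + (c₂ * x ^ 2 + dd) ^ 2)) ^ (-p)) b
  have E2 : (∫ x : ℝ, (Real.sqrt (1 + (c₂ * x ^ 2 + dd) ^ 2)) ^ (-p))
      = s * ∫ y : ℝ, (Real.sqrt (1 + (c₂ * (s * y) ^ 2 + dd) ^ 2)) ^ (-p) := by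
    have t1 := MeasureTheory.Measure.integral_comp_mul_left
      (fun x : ℝ => (Real.sqrt (1 + (c₂ * x ^ 2 + dd) ^ 2)) ^ (-p)) s
    rw [t1, abs_of_pos (inv_pos.2 hs0), smul_eq_mul]
    field_simp
  have E3 : (∫ y : ℝ, (Real.sqrt (1 + (c₂ * (s * y) ^ 2 + dd) ^ 2)) ^ (-p))
      = ∫ y : ℝ, (Real.sqrt (1 + (y ^ 2 + ε * dd) ^ 2)) ^ (-p) := by
    congr 1
    funext y
    have : (c₂ * (s * y) ^ 2 + dd) ^ 2 = (y ^ 2 + ε * dd) ^ 2 := by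
      have expand : c₂ * (s * y) ^ 2 = ε * y ^ 2 := by rw [hε]; ring
      rw [expand]
      linear_combination (y ^ 4 - dd ^ 2) * hε2
    rw [this]
  have hcore := core (ε * dd)
  have hsq : (ε * dd) ^ 2 = dd ^ 2 := by
    rw [mul_pow, hε2, one_mul]
  rw [hsq] at hcore
  have Erhs : (Real.sqrt (1 + dd ^ 2)) ^ (-(1 / 2 : ℝ)) = (1 + dd ^ 2) ^ (-((1:ℝ)/4)) := by
    rw [Real.sqrt_eq_rpow, ← Real.rpow_mul (by positivity)]
    norm_num
  calc (∫ x : ℝ, (Real.sqrt (1 + (c₂ * x ^ 2 + c₁ * x + c₀) ^ 2)) ^ (-p))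
      = s * ∫ y : ℝ, (Real.sqrt (1 + (y ^ 2 + ε * dd) ^ 2)) ^ (-p) := by
        rw [E0, E1, E2, E3]
    _ ≤ s * (C * (1 + dd ^ 2) ^ (-((1:ℝ)/4))) :=
        mul_le_mul_of_nonneg_left hcore hs0.le
    _ = C * s * (Real.sqrt (1 + dd ^ 2)) ^ (-(1 / 2 : ℝ)) := by rw [Erhs]; ring
end

section
/- Let p > 1/2 and c₀, c₁, c₂ ∈ ℝ with c₂ ≠ 0. Then there is a constant C depending only on p such that ∫_ℝ ⟨c₂ x² + c₁ x + c₀⟩^{-p} dx ≤ C |c₂|^{-1/2}. -/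
open MeasureTheory Real

-- auxiliary: antitonicity of x ↦ (√(1+x))^(-p)
lemma aux_anti {p a b : ℝ} (hp : 0 < p) (hab : b ^ 4 ≤ a ^ 2) :
    (Real.sqrt (1 + a ^ 2)) ^ (-p) ≤ (Real.sqrt (1 + b ^ 4)) ^ (-p) := by
  apply Real.rpow_le_rpow_of_nonpos
  · exact Real.sqrt_pos.mpr (by positivity)
  · exact Real.sqrt_le_sqrt (by linarith)
  · linarith

lemma aux_sq_trick (σ D t : ℝ) (h : σ ^ 2 = 1) :
    (σ * t ^ 2 + D) ^ 2 = (t ^ 2 + σ * D) ^ 2 := by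
  linear_combination (t ^ 4 - D ^ 2) * h

lemma aux_integrable {p : ℝ} (hp : 1 / 2 < p) :
    Integrable (fun t : ℝ => (Real.sqrt (1 + t ^ 4)) ^ (-p)) := by
  have hp0 : 0 < p := by linarith
  have hmaj : Integrable (fun t : ℝ => (2 * Real.sqrt 2) ^ p * (1 + ‖t‖) ^ (-(2 * p))) := by
    refine Integrable.const_mul ?_ _
    apply integrable_one_add_norm (E := ℝ)
    simp only [Module.finrank_self, Nat.cast_one]
    linarith
  have hcont : Continuous (fun t : ℝ => (Real.sqrt (1 + t ^ 4)) ^ (-p)) := by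
    apply Continuous.rpow_const
    · exact (continuous_const.add (continuous_pow 4)).sqrt
    · intro t
      left
      have ht4 : (0 : ℝ) < 1 + t ^ 4 := by positivity
      exact (Real.sqrt_pos.mpr ht4).ne'
  refine hmaj.mono' hcont.aestronglyMeasurable (Filter.Eventually.of_forall fun t => ?_)
  have h1 : (0 : ℝ) < Real.sqrt (1 + t ^ 4) := Real.sqrt_pos.mpr (by positivity)
  rw [Real.norm_eq_abs, abs_of_nonneg (Real.rpow_nonneg h1.le _)]
  have h8 : (0 : ℝ) < 2 * Real.sqrt 2 := by positivity
  have h6 : (0 : ℝ) < 1 + ‖t‖ := by positivity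
  have key : (1 + ‖t‖) ^ 2 ≤ 2 * Real.sqrt 2 * Real.sqrt (1 + t ^ 4) := by
    have h2 : (1 + ‖t‖) ^ 4 ≤ 8 * (1 + t ^ 4) := by
      have ha := abs_nonneg t
      have ht : ‖t‖ ^ 2 = t ^ 2 := by rw [Real.norm_eq_abs, sq_abs]
      nlinarith [sq_nonneg (1 - ‖t‖), sq_nonneg (1 - t ^ 2), sq_nonneg (‖t‖ ^ 2 - 1),
        sq_nonneg t, sq_nonneg ‖t‖]
    have h3 : Real.sqrt ((1 + ‖t‖) ^ 4) ≤ Real.sqrt (8 * (1 + t ^ 4)) :=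
      Real.sqrt_le_sqrt h2
    have h4 : Real.sqrt ((1 + ‖t‖) ^ 4) = (1 + ‖t‖) ^ 2 := by
      rw [show (1 + ‖t‖) ^ 4 = ((1 + ‖t‖) ^ 2) ^ 2 by ring]
      exact Real.sqrt_sq (by positivity)
    have h5 : Real.sqrt (8 * (1 + t ^ 4)) = 2 * Real.sqrt 2 * Real.sqrt (1 + t ^ 4) := by
      rw [Real.sqrt_mul (by norm_num), show (8 : ℝ) = 2 ^ 2 * 2 by norm_num,
        Real.sqrt_mul (by positivity), Real.sqrt_sq (by norm_num)]
    rw [h4, h5] at h3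
    exact h3
  have h7 : Real.sqrt (1 + t ^ 4) ^ (-p) ≤ ((1 + ‖t‖) ^ 2 / (2 * Real.sqrt 2)) ^ (-p) := by
    apply Real.rpow_le_rpow_of_nonpos
    · positivity
    · rw [div_le_iff₀ (by positivity)]
      linarith [key]
    · linarith
  refine h7.trans (le_of_eq ?_)
  have e1 : (((1 + ‖t‖) ^ 2 : ℝ)) ^ (-p) = (1 + ‖t‖) ^ (-(2 * p)) := by
    rw [← Real.rpow_natCast (1 + ‖t‖) 2, ← Real.rpow_mul h6.le]
    norm_num
  rw [Real.div_rpow (by positivity) h8.le, e1, Real.rpow_neg h8.le, div_eq_mul_inv, inv_inv, mul_comm]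

theorem stmt_4 (p : ℝ) (hp : 1 / 2 < p) :
    ∃ C : ℝ, 0 < C ∧ ∀ c₀ c₁ c₂ : ℝ, c₂ ≠ 0 →
      (∫ x : ℝ, (Real.sqrt (1 + (c₂ * x ^ 2 + c₁ * x + c₀) ^ 2)) ^ (-p))
        ≤ C * |c₂| ^ (-(1 / 2 : ℝ)) := by
  have hp0 : 0 < p := by linarith
  set h : ℝ → ℝ := fun t => (Real.sqrt (1 + t ^ 4)) ^ (-p) with hh_def
  have hh_int : Integrable h := aux_integrable hp
  have hh_nonneg : ∀ t, 0 ≤ h t := fun t => Real.rpow_nonneg (Real.sqrt_nonneg _) _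
  have hI_nonneg : 0 ≤ ∫ t, h t := integral_nonneg hh_nonneg
  refine ⟨2 * (∫ t, h t) + 1, by linarith, fun c₀ c₁ c₂ hc₂ => ?_⟩
  have habs : (0 : ℝ) < |c₂| := abs_pos.mpr hc₂
  -- set up the scaling parameters, then make them opaque
  obtain ⟨s, hs, hs2, hsinv⟩ :
      ∃ s : ℝ, 0 < s ∧ s ^ 2 = |c₂| ∧ s⁻¹ = |c₂| ^ (-(1 / 2 : ℝ)) := by
    refine ⟨Real.sqrt |c₂|, Real.sqrt_pos.mpr habs, Real.sq_sqrt habs.le, ?_⟩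
    rw [Real.sqrt_eq_rpow, ← Real.rpow_neg habs.le]
  obtain ⟨σ, hσ2, hc2s⟩ : ∃ σ : ℝ, σ ^ 2 = 1 ∧ c₂ * s⁻¹ ^ 2 = σ := by
    refine ⟨c₂ / |c₂|, ?_, ?_⟩
    · rw [div_pow, sq_abs, div_self (pow_ne_zero 2 hc₂)]
    · rw [inv_pow, hs2, div_eq_mul_inv]
  obtain ⟨b, hb1⟩ : ∃ b : ℝ, 2 * c₂ * b = c₁ := ⟨c₁ / (2 * c₂), by field_simp⟩
  obtain ⟨D, hD'⟩ : ∃ D : ℝ, 4 * c₂ * D = 4 * c₂ * c₀ - c₁ ^ 2 :=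
    ⟨c₀ - c₁ ^ 2 / (4 * c₂), by field_simp⟩
  set e : ℝ := σ * D with he_def
  set G : ℝ → ℝ := fun x => (Real.sqrt (1 + (c₂ * x ^ 2 + c₁ * x + c₀) ^ 2)) ^ (-p)
    with hG_def
  set F : ℝ → ℝ := fun t => (Real.sqrt (1 + (t ^ 2 + e) ^ 2)) ^ (-p) with hF_def
  -- change of variables
  have hcv : ∀ t : ℝ, G (s⁻¹ * t + -b) = F t := by
    intro t
    have expand : c₂ * (s⁻¹ * t + -b) ^ 2 + c₁ * (s⁻¹ * t + -b) + c₀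
        = σ * t ^ 2 + D := by
      have h4c : (4 : ℝ) * c₂ ≠ 0 := by simp [hc₂]
      apply mul_left_cancel₀ h4c
      linear_combination (4 * c₂ * t ^ 2) * hc2s
        + (-(4 * c₂ * s⁻¹ * t) + 2 * c₂ * b - c₁) * hb1 - hD'
    have hkey : (c₂ * (s⁻¹ * t + -b) ^ 2 + c₁ * (s⁻¹ * t + -b) + c₀) ^ 2
        = (t ^ 2 + e) ^ 2 := by
      rw [expand, he_def, aux_sq_trick σ D t hσ2]
    simp only [hG_def, hF_def, hkey]
  have step1 : (∫ t : ℝ, F t) = s * ∫ x, G x := by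
    have e1 : (∫ t : ℝ, F t) = ∫ t : ℝ, (fun y => G (y + -b)) (s⁻¹ * t) := by
      congr 1; ext t; exact (hcv t).symm
    rw [e1, MeasureTheory.Measure.integral_comp_mul_left (fun y => G (y + -b)) s⁻¹,
      inv_inv, abs_of_pos hs, integral_add_right_eq_self G (-b), smul_eq_mul]
  have step2 : (∫ x : ℝ, G x) = s⁻¹ * ∫ t, F t := by
    rw [step1, ← mul_assoc, inv_mul_cancel₀ hs.ne', one_mul]
  -- bound ∫ F
  obtain ⟨r, hr0, hr2⟩ : ∃ r : ℝ, 0 ≤ r ∧ r ^ 2 = max (-e) 0 :=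
    ⟨Real.sqrt (max (-e) 0), Real.sqrt_nonneg _, Real.sq_sqrt (le_max_right _ _)⟩
  have hFbound : ∀ t, F t ≤ h (t - r) + h (t + r) := by
    intro t
    rcases le_or_gt 0 e with he0 | he0
    · have hre : r = 0 := by
        have : r ^ 2 = 0 := by rw [hr2, max_eq_right (by linarith)]
        exact pow_eq_zero_iff (n := 2) (by norm_num) |>.mp this
      have h1 : F t ≤ h t := by
        apply aux_anti hp0
        nlinarith [sq_nonneg t]
      rw [hre, sub_zero, add_zero]
      linarith [hh_nonneg t, h1]
    · have hre : r ^ 2 = -e := by rw [hr2, max_eq_left (by linarith)]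
      have hfact : t ^ 2 + e = (t - r) * (t + r) := by linear_combination hre
      rcases le_or_gt 0 t with ht | ht
      · have h1 : F t ≤ h (t - r) := by
          apply aux_anti hp0
          rw [hfact]
          nlinarith [mul_nonneg ht hr0, sq_nonneg (t - r), sq_nonneg (t + r)]
        linarith [hh_nonneg (t + r), h1]
      · have h1 : F t ≤ h (t + r) := by
          apply aux_anti hp0
          rw [hfact]
          nlinarith [mul_nonneg (neg_nonneg.mpr ht.le) hr0, sq_nonneg (t - r),
            sq_nonneg (t + r)]
        linarith [hh_nonneg (t - r), h1]
  have hint1 : Integrable (fun t => h (t - r)) := hh_int.comp_sub_right r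
  have hint2 : Integrable (fun t => h (t + r)) := hh_int.comp_add_right r
  have hdom_int : Integrable (fun t => h (t - r) + h (t + r)) := hint1.add hint2
  have hF_le : (∫ t, F t) ≤ ∫ t, (h (t - r) + h (t + r)) := by
    apply integral_mono_of_nonneg
    · exact Filter.Eventually.of_forall fun t => Real.rpow_nonneg (Real.sqrt_nonneg _) _
    · exact hdom_int
    · exact Filter.Eventually.of_forall hFbound
  have hdom_eq : (∫ t, (h (t - r) + h (t + r))) = 2 * ∫ t, h t := by
    rw [integral_add hint1 hint2, integral_sub_right_eq_self h r,
      integral_add_right_eq_self h r]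
    ring
  have hfinal : (∫ x, G x) ≤ s⁻¹ * (2 * ∫ t, h t) := by
    rw [step2]
    apply mul_le_mul_of_nonneg_left _ (inv_nonneg.mpr hs.le)
    rw [← hdom_eq]
    exact hF_le
  calc (∫ x, G x) ≤ s⁻¹ * (2 * ∫ t, h t) := hfinal
    _ ≤ s⁻¹ * (2 * (∫ t, h t) + 1) := by
        apply mul_le_mul_of_nonneg_left _ (inv_nonneg.mpr hs.le)
        linarith
    _ = (2 * (∫ t, h t) + 1) * |c₂| ^ (-(1 / 2 : ℝ)) := by rw [← hsinv]; ring
end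

section
/- Let p > 1/3 and c₀, c₁, c₂, c₃ ∈ ℝ with c₃ ≠ 0. Then there is a constant C depending only on p such that ∫_ℝ ⟨c₃ x³ + c₂ x² + c₁ x + c₀⟩^{-p} dx ≤ C |c₃|^{-1/3}. -/
open MeasureTheory Real Polynomial

lemma cube_ineq (u : ℝ) : (1 + u ^ 2) ^ 3 ≤ 4 * (1 + u ^ 6) := by
  nlinarith [mul_nonneg (sq_nonneg (1 - u ^ 2)) (sq_nonneg u), sq_nonneg (1 - u ^ 2)]

lemma root_bound (c₀ c₁ c₂ c₃ : ℝ) (hc : c₃ ≠ 0) :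
    ∃ a₁ a₂ a₃ : ℝ, ∀ x : ℝ,
      |c₃| * (|x - a₁| * |x - a₂| * |x - a₃|) ≤ |c₃ * x ^ 3 + c₂ * x ^ 2 + c₁ * x + c₀| := by
  set P : Cubic ℝ := ⟨c₃, c₂, c₁, c₀⟩ with hP
  have hsplit : Splits (P.toPoly.map Complex.ofRealHom) := IsAlgClosed.splits _
  obtain ⟨r₁, r₂, r₃, h3⟩ := (Cubic.splits_iff_roots_eq_three (φ := Complex.ofRealHom) hc).mp hsplit
  have key := Cubic.eq_prod_three_roots (φ := Complex.ofRealHom) hc h3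
  refine ⟨r₁.re, r₂.re, r₃.re, fun x => ?_⟩
  have hev : ((c₃ * x ^ 3 + c₂ * x ^ 2 + c₁ * x + c₀ : ℝ) : ℂ)
      = (x - r₁) * ((x - r₂) * ((x - r₃) * c₃)) := by
    have := congrArg (Polynomial.eval (x : ℂ)) key
    simp [Cubic.toPoly, Cubic.map, hP] at this
    push_cast
    linear_combination this
  have habs : |c₃ * x ^ 3 + c₂ * x ^ 2 + c₁ * x + c₀|
      = ‖(x : ℂ) - r₁‖ * (‖(x : ℂ) - r₂‖ * (‖(x : ℂ) - r₃‖ * |c₃|)) := by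
    rw [← Real.norm_eq_abs, ← Complex.norm_real, hev]
    simp [norm_mul]
  rw [habs]
  have h1 : |x - r₁.re| ≤ ‖(x : ℂ) - r₁‖ := by
    simpa using Complex.abs_re_le_norm ((x : ℂ) - r₁)
  have h2 : |x - r₂.re| ≤ ‖(x : ℂ) - r₂‖ := by
    simpa using Complex.abs_re_le_norm ((x : ℂ) - r₂)
  have h3' : |x - r₃.re| ≤ ‖(x : ℂ) - r₃‖ := by
    simpa using Complex.abs_re_le_norm ((x : ℂ) - r₃)
  have hmul : |x - r₁.re| * |x - r₂.re| * |x - r₃.re|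
      ≤ ‖(x : ℂ) - r₁‖ * ‖(x : ℂ) - r₂‖ * ‖(x : ℂ) - r₃‖ := by
    gcongr <;> positivity
  calc |c₃| * (|x - r₁.re| * |x - r₂.re| * |x - r₃.re|)
      ≤ |c₃| * (‖(x : ℂ) - r₁‖ * ‖(x : ℂ) - r₂‖ * ‖(x : ℂ) - r₃‖) :=
        mul_le_mul_of_nonneg_left hmul (abs_nonneg c₃)
    _ = ‖(x : ℂ) - r₁‖ * (‖(x : ℂ) - r₂‖ * (‖(x : ℂ) - r₃‖ * |c₃|)) := by ring

theorem stmt_5 (p : ℝ) (hp : 1 / 3 < p) :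
    ∃ C : ℝ, 0 < C ∧ ∀ c₀ c₁ c₂ c₃ : ℝ, c₃ ≠ 0 →
      (∫ x : ℝ, (Real.sqrt (1 + (c₃ * x ^ 3 + c₂ * x ^ 2 + c₁ * x + c₀) ^ 2)) ^ (-p))
        ≤ C * |c₃| ^ (-(1 / 3 : ℝ)) := by
  have hp0 : 0 < p := lt_trans (by norm_num) hp
  set g : ℝ → ℝ := fun u => (1 + u ^ 2) ^ (-(3 * p) / 2) with hgdef
  have hg : Integrable g := by
    have := integrable_rpow_neg_one_add_norm_sq (E := ℝ) (μ := volume)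
      (r := 3 * p) (by simpa using by linarith : (Module.finrank ℝ ℝ : ℝ) < 3 * p)
    simpa [hgdef, Real.norm_eq_abs, sq_abs] using this
  set I : ℝ := ∫ u : ℝ, g u with hIdef
  have hI0 : 0 ≤ I := integral_nonneg fun u => rpow_nonneg (by positivity) _
  have h4 : (0:ℝ) < (4:ℝ) ^ (p / 2) := rpow_pos_of_pos (by norm_num) _
  refine ⟨3 * (4:ℝ) ^ (p / 2) * (I + 1), by positivity, fun c₀ c₁ c₂ c₃ hc => ?_⟩
  set b : ℝ := |c₃| ^ ((1:ℝ)/3) with hbdef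
  have hc0 : 0 < |c₃| := abs_pos.mpr hc
  have hb : 0 < b := rpow_pos_of_pos hc0 _
  have hb3 : b ^ 3 = |c₃| := by
    rw [hbdef, ← Real.rpow_natCast (|c₃| ^ ((1:ℝ)/3)) 3, ← Real.rpow_mul hc0.le]
    norm_num
  obtain ⟨a₁, a₂, a₃, hroot⟩ := root_bound c₀ c₁ c₂ c₃ hc
  set h : ℝ → ℝ := fun x =>
    (4:ℝ) ^ (p / 2) * (g (b * (x - a₁)) + g (b * (x - a₂)) + g (b * (x - a₃))) with hhdef
  -- integrability of h
  have hgi : ∀ a : ℝ, Integrable fun x : ℝ => g (b * (x - a)) := fun a =>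
    (hg.comp_mul_left' hb.ne').comp_sub_right a
  have hhint : Integrable h := (((hgi a₁).add (hgi a₂)).add (hgi a₃)).const_mul _
  -- pointwise bound
  have hpt : ∀ x : ℝ,
      (Real.sqrt (1 + (c₃ * x ^ 3 + c₂ * x ^ 2 + c₁ * x + c₀) ^ 2)) ^ (-p) ≤ h x := by
    intro x
    set P := c₃ * x ^ 3 + c₂ * x ^ 2 + c₁ * x + c₀ with hPdef
    set t : ℝ := min |x - a₁| (min |x - a₂| |x - a₃|) with htdef
    have ht0 : 0 ≤ t := le_min (abs_nonneg _) (le_min (abs_nonneg _) (abs_nonneg _))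
    have htle : |c₃| * t ^ 3 ≤ |P| := by
      refine le_trans ?_ (hroot x)
      have h1 : t ≤ |x - a₁| := min_le_left _ _
      have h2 : t ≤ |x - a₂| := le_trans (min_le_right _ _) (min_le_left _ _)
      have h3 : t ≤ |x - a₃| := le_trans (min_le_right _ _) (min_le_right _ _)
      have : t ^ 3 ≤ |x - a₁| * |x - a₂| * |x - a₃| := by
        calc t ^ 3 = t * t * t := by ring
          _ ≤ |x - a₁| * |x - a₂| * |x - a₃| := by
            gcongr <;> first | assumption | positivity
      exact mul_le_mul_of_nonneg_left this (abs_nonneg _)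
    have hbt6 : (b * t) ^ 6 ≤ P ^ 2 := by
      have h1 : (b * t) ^ 3 ≤ |P| := by
        calc (b * t) ^ 3 = |c₃| * t ^ 3 := by rw [mul_pow, hb3]
          _ ≤ |P| := htle
      calc (b * t) ^ 6 = ((b * t) ^ 3) ^ 2 := by ring
        _ ≤ |P| ^ 2 := pow_le_pow_left₀ (by positivity) h1 2
        _ = P ^ 2 := sq_abs P
    set B : ℝ := 1 + (b * t) ^ 2 with hBdef
    have hB0 : (0:ℝ) < B := by positivity
    have hA0 : (0:ℝ) < 1 + P ^ 2 := by positivity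
    have key1 : B ^ 3 ≤ 4 * (1 + P ^ 2) := by
      calc B ^ 3 ≤ 4 * (1 + (b * t) ^ 6) := cube_ineq (b * t)
        _ ≤ 4 * (1 + P ^ 2) := by linarith
    have e1 : (Real.sqrt (1 + P ^ 2)) ^ (-p) = (1 + P ^ 2) ^ (-p / 2) := by
      rw [Real.sqrt_eq_rpow, ← Real.rpow_mul hA0.le]
      congr 1; ring
    have hq1 : B ^ 3 / 4 ≤ 1 + P ^ 2 := by
      rw [div_le_iff₀ (by norm_num : (0:ℝ) < 4)]
      calc B ^ 3 ≤ 4 * (1 + P ^ 2) := key1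
        _ = (1 + P ^ 2) * 4 := by ring
    have e2 : (1 + P ^ 2) ^ (-p / 2) ≤ (B ^ 3 / 4) ^ (-p / 2) :=
      Real.rpow_le_rpow_of_nonpos (by positivity) hq1 (by linarith)
    have e3 : (B ^ 3 / 4) ^ (-p / 2) = (4:ℝ) ^ (p / 2) * B ^ (-(3 * p) / 2) := by
      rw [Real.div_rpow (by positivity) (by norm_num)]
      rw [div_eq_mul_inv, ← Real.rpow_neg (by norm_num : (0:ℝ) ≤ 4)]
      rw [← Real.rpow_natCast B 3, ← Real.rpow_mul hB0.le]
      rw [mul_comm]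
      congr 1
      · ring
      · push_cast; ring
    -- B-term is one of the three g-terms
    have hsum : B ^ (-(3 * p) / 2)
        ≤ g (b * (x - a₁)) + g (b * (x - a₂)) + g (b * (x - a₃)) := by
      have hg0 : ∀ a : ℝ, 0 ≤ g (b * (x - a)) := fun a => rpow_nonneg (by positivity) _
      have hcase : t = |x - a₁| ∨ t = |x - a₂| ∨ t = |x - a₃| := by
        rw [htdef]
        rcases min_cases |x - a₁| (min |x - a₂| |x - a₃|) with ⟨h1, _⟩ | ⟨h1, _⟩
        · exact Or.inl h1
        · rcases min_cases |x - a₂| |x - a₃| with ⟨h2, _⟩ | ⟨h2, _⟩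
          · exact Or.inr (Or.inl (h1.trans h2))
          · exact Or.inr (Or.inr (h1.trans h2))
      have hBe : ∀ a : ℝ, t = |x - a| → B ^ (-(3 * p) / 2) = g (b * (x - a)) := by
        intro a ha
        rw [hgdef]
        congr 2
        rw [hBdef, ha, mul_pow, mul_pow, sq_abs]
      rcases hcase with hca | hca | hca <;> rw [hBe _ hca] <;>
        [linarith [hg0 a₂, hg0 a₃]; linarith [hg0 a₁, hg0 a₃]; linarith [hg0 a₁, hg0 a₂]]
    calc (Real.sqrt (1 + P ^ 2)) ^ (-p) = (1 + P ^ 2) ^ (-p / 2) := e1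
      _ ≤ (B ^ 3 / 4) ^ (-p / 2) := e2
      _ = (4:ℝ) ^ (p / 2) * B ^ (-(3 * p) / 2) := e3
      _ ≤ h x := mul_le_mul_of_nonneg_left hsum h4.le
  -- integrate
  have hmono : (∫ x : ℝ, (Real.sqrt (1 + (c₃ * x ^ 3 + c₂ * x ^ 2 + c₁ * x + c₀) ^ 2)) ^ (-p))
      ≤ ∫ x : ℝ, h x :=
    integral_mono_of_nonneg (Filter.Eventually.of_forall fun x => rpow_nonneg (Real.sqrt_nonneg _) _)
      hhint (Filter.Eventually.of_forall hpt)
  have hint_g : ∀ a : ℝ, (∫ x : ℝ, g (b * (x - a))) = b⁻¹ * I := by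
    intro a
    rw [integral_sub_right_eq_self (fun y => g (b * y)) a,
      MeasureTheory.Measure.integral_comp_mul_left g b]
    rw [abs_of_pos (inv_pos.mpr hb), smul_eq_mul]
  have hinth : (∫ x : ℝ, h x) = (4:ℝ) ^ (p / 2) * (3 * (b⁻¹ * I)) := by
    have h12 : Integrable (fun x : ℝ => g (b * (x - a₁)) + g (b * (x - a₂))) volume :=
      (hgi a₁).add (hgi a₂)
    simp only [hhdef]
    rw [integral_const_mul, integral_add h12 (hgi a₃), integral_add (hgi a₁) (hgi a₂),
      hint_g, hint_g, hint_g]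
    ring
  have hbinv : b⁻¹ = |c₃| ^ (-(1 / 3 : ℝ)) := by
    rw [hbdef, ← Real.rpow_neg_one, ← Real.rpow_mul hc0.le]
    norm_num
  have hbinv0 : 0 < b⁻¹ := inv_pos.mpr hb
  calc (∫ x : ℝ, (Real.sqrt (1 + (c₃ * x ^ 3 + c₂ * x ^ 2 + c₁ * x + c₀) ^ 2)) ^ (-p))
      ≤ ∫ x : ℝ, h x := hmono
    _ = (4:ℝ) ^ (p / 2) * (3 * (b⁻¹ * I)) := hinth
    _ ≤ 3 * (4:ℝ) ^ (p / 2) * (I + 1) * b⁻¹ := by nlinarith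
    _ = 3 * (4:ℝ) ^ (p / 2) * (I + 1) * |c₃| ^ (-(1 / 3 : ℝ)) := by rw [hbinv]
end

section
/- Let ξ₁, ξ₂ ∈ ℝ with ξ₁ ≥ 0, ξ₂ ≤ −2, ξ₁ ≤ 1, and set ξ₃ = −ξ₁ − ξ₂. Then |ξ₂ (3ξ₁² + 3ξ₁ξ₂ + 2ξ₂² − 1)| ≥ c |ξ₂|³ for some absolute constant c > 0, and moreover |ξ₂| and |ξ₃| are comparable: (1/2)|ξ₂| ≤ |ξ₃| ≤ 2|ξ₂|. -/
theorem stmt_9 :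
    ∃ c : ℝ, 0 < c ∧ ∀ ξ₁ ξ₂ : ℝ, 0 ≤ ξ₁ → ξ₁ ≤ 1 → ξ₂ ≤ -2 →
      |ξ₂ * (3 * ξ₁ ^ 2 + 3 * ξ₁ * ξ₂ + 2 * ξ₂ ^ 2 - 1)| ≥ c * |ξ₂| ^ 3 ∧
      (1 / 2) * |ξ₂| ≤ |(-ξ₁ - ξ₂)| ∧ |(-ξ₁ - ξ₂)| ≤ 2 * |ξ₂| := by
  refine ⟨1/8, by norm_num, fun ξ₁ ξ₂ h0 h1 h2 => ?_⟩
  have hneg : ξ₂ < 0 := by linarith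
  have habs2 : |ξ₂| = -ξ₂ := abs_of_neg hneg
  have h3 : (0:ℝ) < -ξ₁ - ξ₂ := by linarith
  have habs3 : |(-ξ₁ - ξ₂)| = -ξ₁ - ξ₂ := abs_of_pos h3
  have hQ : 3 * ξ₁ ^ 2 + 3 * ξ₁ * ξ₂ + 2 * ξ₂ ^ 2 - 1 ≥ (1/8) * ξ₂ ^ 2 := by
    nlinarith [sq_nonneg ξ₁, sq_nonneg (ξ₂ + 2), mul_nonneg h0 (sq_nonneg ξ₁), sq_nonneg (ξ₁ + ξ₂)]
  have hQpos : 0 < 3 * ξ₁ ^ 2 + 3 * ξ₁ * ξ₂ + 2 * ξ₂ ^ 2 - 1 := by nlinarith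
  refine ⟨?_, by rw [habs2, habs3]; linarith, by rw [habs2, habs3]; linarith⟩
  rw [abs_mul, habs2, abs_of_pos hQpos]
  nlinarith [sq_nonneg ξ₂, mul_pos (neg_pos.mpr hneg) hQpos]
end

section
/- Let b with 1/2 < b ≤ 3/4. Then for all real ξ₃ with |ξ₃| ≥ 1 and all real L₃, |ξ₃|^{3/2} / (⟨L₃⟩^{2−2b} ⟨L₃ + (3/4)ξ₃³⟩^{1/2}) ≤ C for an absolute constant C. -/
open Real

theorem stmt_11 :
    ∃ C : ℝ, 0 < C ∧ ∀ b : ℝ, 1 / 2 < b → b ≤ 3 / 4 →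
      ∀ ξ₃ L₃ : ℝ, 1 ≤ |ξ₃| →
        |ξ₃| ^ ((3 : ℝ) / 2)
            / ((Real.sqrt (1 + L₃ ^ 2)) ^ (2 - 2 * b)
              * (Real.sqrt (1 + (L₃ + (3 / 4) * ξ₃ ^ 3) ^ 2)) ^ ((1 : ℝ) / 2))
          ≤ C := by
  refine ⟨2, by norm_num, fun b hb1 hb2 ξ L hξ => ?_⟩
  set a : ℝ := L + 3 / 4 * ξ ^ 3 with ha
  set s : ℝ := Real.sqrt (1 + L ^ 2) with hs_def
  set t : ℝ := Real.sqrt (1 + a ^ 2) with ht_def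
  have hs1 : (1 : ℝ) ≤ s := by
    rw [hs_def]
    have := Real.sqrt_le_sqrt (show (1:ℝ) ≤ 1 + L ^ 2 by nlinarith [sq_nonneg L])
    simpa using this
  have ht1 : (1 : ℝ) ≤ t := by
    rw [ht_def]
    have := Real.sqrt_le_sqrt (show (1:ℝ) ≤ 1 + a ^ 2 by nlinarith [sq_nonneg a])
    simpa using this
  have hs0 : (0 : ℝ) ≤ s := le_trans zero_le_one hs1
  have ht0 : (0 : ℝ) ≤ t := le_trans zero_le_one ht1
  -- denominator lower bound steps
  have h1 : s ^ ((1:ℝ)/2) ≤ s ^ (2 - 2 * b) :=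
    Real.rpow_le_rpow_of_exponent_le hs1 (by linarith)
  have h2 : s ^ ((1:ℝ)/2) * t ^ ((1:ℝ)/2) = (s * t) ^ ((1:ℝ)/2) :=
    (Real.mul_rpow hs0 ht0).symm
  -- s * t ≥ |ξ|^3 / 4
  have hst : |ξ| ^ 3 / 4 ≤ s * t := by
    rw [hs_def, ht_def, ← Real.sqrt_mul (by positivity)]
    have : |ξ| ^ 3 / 4 = Real.sqrt ((|ξ| ^ 3 / 4) ^ 2) :=
      (Real.sqrt_sq (by positivity)).symm
    rw [this]
    apply Real.sqrt_le_sqrt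
    have habs : (|ξ| ^ 3) ^ 2 = ξ ^ 6 := by
      rw [← abs_pow, sq_abs]; ring
    rw [div_pow, habs, ha]
    nlinarith [sq_nonneg (2 * L + 3 / 4 * ξ ^ 3), sq_nonneg (L * (L + 3 / 4 * ξ ^ 3)),
      sq_nonneg (ξ ^ 3), sq_nonneg L]
  have h3 : (|ξ| ^ 3 / 4) ^ ((1:ℝ)/2) ≤ (s * t) ^ ((1:ℝ)/2) :=
    Real.rpow_le_rpow (by positivity) hst (by norm_num)
  -- compute (|ξ|^3/4)^(1/2) = |ξ|^(3/2) / 2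
  have h4 : (|ξ| ^ 3 / 4) ^ ((1:ℝ)/2) = |ξ| ^ ((3:ℝ)/2) / 2 := by
    rw [Real.div_rpow (by positivity) (by norm_num)]
    congr 1
    · rw [← Real.rpow_natCast |ξ| 3, ← Real.rpow_mul (abs_nonneg ξ)]
      norm_num
    · rw [show (4:ℝ) = 2 ^ (2:ℕ) by norm_num, ← Real.rpow_natCast 2 2,
        ← Real.rpow_mul (by norm_num)]
      norm_num
  have hD : 0 < s ^ (2 - 2 * b) * t ^ ((1:ℝ)/2) := by positivity
  rw [div_le_iff₀ hD]
  have h5 : s ^ ((1:ℝ)/2) * t ^ ((1:ℝ)/2) ≤ s ^ (2 - 2 * b) * t ^ ((1:ℝ)/2) :=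
    mul_le_mul_of_nonneg_right h1 (Real.rpow_nonneg ht0 _)
  have h6 : |ξ| ^ ((3:ℝ)/2) / 2 ≤ s ^ ((1:ℝ)/2) * t ^ ((1:ℝ)/2) := by
    rw [h2, ← h4]; exact h3
  linarith
end
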